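/- arXiv:math/0107054 — 4 statements merged into one kernel-verified Lean document; each statement's English description precedes it below -/
import Mathlib

section
/- Let M = C_1 ··· C_N be a good monomial in the letters A, B, and suppose C_i = B. Then M_{c_1} ∘ ··· ∘ M_{c_{i-1}}(ι_{2,1}) ≠ 0 in Λ, where c_j = a if C_j = A and c_j = b if C_j = B. -/
open Finset Filter MvPowerSeries

noncomputable section

/-- Formal power series in two variables `q` (index 0) and `z` (index 1). -/
abbrev PS : Type := MvPowerSeries (Fin 2) ℂ

/-- The variable `q`. -/
def Qv : PS := MvPowerSeries.X 0
/-- The variable `z`. -/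
def Zv : PS := MvPowerSeries.X 1

/-- Build a power series from its coefficient function. -/
def ofCoeff (c : (Fin 2 →₀ ℕ) → ℂ) : PS := c

/-- The exponent `q^a z^c`. -/
def idx2 (a c : ℕ) : Fin 2 →₀ ℕ := Finsupp.single 0 a + Finsupp.single 1 c

/-- The q-shift operator `(S g)(q,z) = g(q,qz)`. -/
def Sop (f : PS) : PS :=
  ofCoeff fun e => if e 1 ≤ e 0 then MvPowerSeries.coeff (idx2 (e 0 - e 1) (e 1)) f else 0

/-- The window condition for `(k,l)`-configurations: `x_j + ... + x_{j+l-1} ≤ k`. -/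
def windowOK (k l : ℕ) (x : ℕ → ℕ) : Prop := ∀ j, ∑ t ∈ Finset.range l, x (j + t) ≤ k

/-- The boundary condition: `x_0 + ... + x_i ≤ b_i` for `0 ≤ i ≤ l-2`. -/
def boundOK (l : ℕ) (b : ℕ → ℕ) (x : ℕ → ℕ) : Prop :=
  ∀ i, i < l - 1 → ∑ t ∈ Finset.range (i + 1), x t ≤ b i

/-- Admissible boundary vectors: `b_0 ≤ b_1 ≤ ... ≤ b_{l-2} ≤ k`. -/
def AdmB (k l : ℕ) (b : ℕ → ℕ) : Prop :=
  (∀ i j, i ≤ j → j < l - 1 → b i ≤ b j) ∧ ∀ i, i < l - 1 → b i ≤ k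

/-- The character `χ^{(N)}_{k,l;b}(q,z)`: the coefficient of `q^a z^m` counts
`(k,l)`-configurations of length at most `N` obeying the boundary conditions,
with `Σ j·x_j = a` and `Σ x_j = m`. -/
def chiN (k l N : ℕ) (b : ℕ → ℕ) : PS :=
  ofCoeff fun e => (Nat.card {x : ℕ → ℕ //
    windowOK k l x ∧ boundOK l b x ∧ (∀ i, N ≤ i → x i = 0) ∧
    ∑ j ∈ Finset.range N, j * x j = e 0 ∧ ∑ j ∈ Finset.range N, x j = e 1} : ℂ)

/-- The limit character `χ^{(∞)}_{k,l;b}(q,z)`. -/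
def chiInf (k l : ℕ) (b : ℕ → ℕ) : PS :=
  ofCoeff fun e => (Nat.card {x : ℕ → ℕ //
    windowOK k l x ∧ boundOK l b x ∧ (∀ i, e 0 + 1 ≤ i → x i = 0) ∧
    ∑ j ∈ Finset.range (e 0 + 1), j * x j = e 0 ∧
    ∑ j ∈ Finset.range (e 0 + 1), x j = e 1} : ℂ)

/-- The shifted boundary vector `(b_1 - i, ..., b_{l-2} - i, k - i)`. -/
def shiftB (k l : ℕ) (b : ℕ → ℕ) (i : ℕ) : ℕ → ℕ :=
  fun j => if j + 1 ≤ l - 2 then b (j + 1) - i else k - i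

/-- The monomial `q^{p.1} z^{p.2}`. -/
def monoPS (p : ℕ × ℕ) : PS := Qv ^ p.1 * Zv ^ p.2

/-- Exponents in the bracket `[P_1,...,P_l] = P_1^{b_0} P_2^{b_1-b_0} ⋯ P_l^{k-b_{l-2}}`. -/
def bexp (l k : ℕ) (b : ℕ → ℕ) (i : ℕ) : ℕ :=
  if i = 0 then b 0 else if i = l - 1 then k - b (l - 2) else b i - b (i - 1)

/-- The bracket `[P_1,...,P_l]` as a function of the boundary vector `b`. -/
def bracket (l k : ℕ) (P : ℕ → ℕ × ℕ) (b : ℕ → ℕ) : PS :=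
  ∏ i ∈ Finset.range l, monoPS (P i) ^ bexp l k b i

/-- q-exponent pattern of the tuples in the list defining `V_l`
(`r` of the entries carry a factor `z`; `c 0 = 0`). -/
def patQ (l r : ℕ) (c : ℕ → ℕ) (j : ℕ) : ℕ := if j < r then c (l - r + j) else c (j - r)

/-- z-exponent pattern of the tuples in the list defining `V_l`. -/
def patZ (r j : ℕ) : ℕ := if j < r then 1 else 0

/-- The tuples `(P_1,...,P_l)` appearing in the definition of `V_l`, namely
`q^{mk} z^{nk}[q^{c_{l-r}}z, …, q^{c_{l-1}}z, 1, q^{c_1}, …, q^{c_{l-1-r}}]`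
with the common factor `q^m z^n` distributed over the entries. -/
def SimpleTuple (l : ℕ) (P : ℕ → ℕ × ℕ) : Prop :=
  ∃ m n r : ℕ, r < l ∧ ∃ c : ℕ → ℕ, c 0 = 0 ∧ Monotone c ∧
    ∀ j, j < l → P j = (m + patQ l r c j, n + patZ r j)

/-- Admissible boundary data. -/
def Adm (k l : ℕ) : Type := {b : ℕ → ℕ // AdmB k l b}

/-- The ambient space of functions of `b` with values in power series; `V_l` is a
subspace of it. -/
abbrev VV (k l : ℕ) : Type := Adm k l → PS

/-- The simple vector `f(q,z)·[P_1,...,P_l]`. -/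
def simpleVal (k l : ℕ) (f : PS) (P : ℕ → ℕ × ℕ) : VV k l := fun b => f * bracket l k P b.val

/-- The space `V_l`, spanned by simple vectors. -/
def Vspan (k l : ℕ) : Submodule ℂ (VV k l) :=
  Submodule.span ℂ {v | ∃ f P, SimpleTuple l P ∧ v = simpleVal k l f P}

/-- Power series expansion of `1/(1 - q^{w.1} z^{w.2})` where `w` may have negative
exponents, in which case `1/(1-u) = -Σ_{n≥1} u^{-n}` is used. -/
def geomPS : ℤ × ℤ → PS := fun w =>
  if 0 ≤ w.1 ∧ 0 ≤ w.2 then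
    ofCoeff fun e => ({n : ℕ | (n : ℤ) * w.1 = (e 0 : ℤ) ∧ (n : ℤ) * w.2 = (e 1 : ℤ)}.ncard : ℂ)
  else
    ofCoeff fun e =>
      -({n : ℕ | 0 < n ∧ (n : ℤ) * w.1 = -(e 0 : ℤ) ∧ (n : ℤ) * w.2 = -(e 1 : ℤ)}.ncard : ℂ)

/-- Exponents of `S(q^{-1} z P_l / P_1)`. -/
def wExpA (l : ℕ) (P : ℕ → ℕ × ℕ) : ℤ × ℤ :=
  (((P (l-1)).1 : ℤ) + ((P (l-1)).2 : ℤ) - ((P 0).1 : ℤ) - ((P 0).2 : ℤ),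
   ((P (l-1)).2 : ℤ) + 1 - ((P 0).2 : ℤ))

/-- The q-shift of a monomial: `S(q^e z^d) = q^{e+d} z^d`. -/
def Smono (p : ℕ × ℕ) : ℕ × ℕ := (p.1 + p.2, p.2)

/-- The tuple `(S P_1, S P_1, S P_2, ..., S P_{l-1})` produced by the operator `A`. -/
def tupA (P : ℕ → ℕ × ℕ) : ℕ → ℕ × ℕ := fun j => if j = 0 then Smono (P 0) else Smono (P (j - 1))

/-- The tuple `(S(q^{-1} z P_l), S P_1, ..., S P_{l-1})` produced by the operator `B`. -/
def tupB (l : ℕ) (P : ℕ → ℕ × ℕ) : ℕ → ℕ × ℕ :=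
  fun j => if j = 0 then ((P (l-1)).1 + (P (l-1)).2, (P (l-1)).2 + 1) else Smono (P (j - 1))

/-- Defining property of the operator `A`:
`A(f[P_1,…,P_l]) = S(f/(1 - q^{-1}zP_l/P_1)·[P_1,P_1,P_2,…,P_{l-1}])`. -/
def HypA (k l : ℕ) (A : Module.End ℂ (VV k l)) : Prop :=
  ∀ f P, SimpleTuple l P →
    A (simpleVal k l f P) = simpleVal k l (Sop f * geomPS (wExpA l P)) (tupA P)

/-- Defining property of the operator `B`:
`B(f[P_1,…,P_l]) = S(f/(1 - q z^{-1}P_1/P_l)·[q^{-1}zP_l,P_1,…,P_{l-1}])`. -/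
def HypB (k l : ℕ) (B : Module.End ℂ (VV k l)) : Prop :=
  ∀ f P, SimpleTuple l P →
    B (simpleVal k l f P) =
      simpleVal k l (Sop f * geomPS (-(wExpA l P).1, -(wExpA l P).2)) (tupB l P)

/-- The vector `v_ini = [1,...,1]`. -/
def vini (k l : ℕ) : VV k l := simpleVal k l 1 (fun _ => (0, 0))

/-- `(z)_n = Π_{i=0}^{n-1} (1 - q^i z)`. -/
def pochZ (n : ℕ) : PS := ∏ i ∈ Finset.range n, (1 - Qv ^ i * Zv)
/-- `(q)_t = Π_{i=1}^{t} (1 - q^i)`. -/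
def pochQ (t : ℕ) : PS := ∏ i ∈ Finset.range t, (1 - Qv ^ (i + 1))
/-- `(q^t z)_∞ = Π_{i≥0} (1 - q^{t+i} z)`, defined coefficientwise. -/
def pochInfQZ (t : ℕ) : PS :=
  ofCoeff fun e =>
    MvPowerSeries.coeff e (∏ i ∈ Finset.range (e 0 + 1), (1 - Qv ^ (t + i) * Zv))
/-- `(z)_∞ = Π_{i≥0} (1 - q^i z)`. -/
def pochInfZ : PS := pochInfQZ 0

/-- The vector `v_∞ = [1,...,1]/(z)_∞`. -/
def vinf (k l : ℕ) : VV k l := simpleVal k l pochInfZ⁻¹ (fun _ => (0, 0))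

/-- Application of a monomial (word) in the operators `A` (letter `true`) and
`B` (letter `false`) to a vector; the leftmost letter acts last read, i.e.
`C_1 C_2 ⋯ C_m v = C_1 (C_2 (⋯ (C_m v)))`. -/
def wact (k l : ℕ) (A B : Module.End ℂ (VV k l)) (w : List Bool) (v : VV k l) : VV k l :=
  w.foldr (fun c u => if c then A u else B u) v

/-- A good monomial: `C_i = A` implies `C_{i+l-1} = A` (letters 0-indexed, `true = A`). -/
def GoodWord (l : ℕ) (w : List Bool) : Prop :=
  ∀ i, i + (l - 1) < w.length → w.getD i true = true → w.getD (i + (l - 1)) true = true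

/-- Canonical representative of an equivalence class of monomials: no trailing `A`s. -/
def Reduced (w : List Bool) : Prop := w = [] ∨ w.getLast? = some false

/-- Symbols for marked vertices: `•`, `∘`, `×`. -/
inductive MSym : Type
  | dot | circ | mark
  deriving DecidableEq

/-- The `A`-arrow on (possibly marked) vertices. -/
def stepA : List MSym → List MSym
  | MSym.circ :: J => J ++ [MSym.circ]
  | MSym.dot :: _ :: J => MSym.dot :: (J ++ [MSym.circ])
  | MSym.mark :: MSym.dot :: J => MSym.dot :: (J ++ [MSym.circ])
  | MSym.mark :: MSym.circ :: J => MSym.mark :: (J ++ [MSym.circ])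
  | MSym.mark :: MSym.mark :: J => MSym.dot :: (J ++ [MSym.circ])
  | v => v

/-- The `B`-arrow on (possibly marked) vertices: rotation. -/
def stepB : List MSym → List MSym
  | [] => []
  | x :: J => J ++ [x]

/-- The marked path of the monomial `w` (extended by `A`s at positions beyond its
length), starting from `[•,…,•,×]`; `mstate l w t` is the vertex after `t` arrows. -/
def mstate (l : ℕ) (w : List Bool) : ℕ → List MSym
  | 0 => List.replicate (l - 1) MSym.dot ++ [MSym.mark]
  | t + 1 => (if w.getD t true then stepA else stepB) (mstate l w t)

/-- The `t`-th vertex of the marked path has the form `[× • J]`, i.e. the `t`-th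
arrow is of type (i) or (ii). -/
def CSrc (l : ℕ) (w : List Bool) (t : ℕ) : Prop :=
  (mstate l w t).getD 0 MSym.circ = MSym.mark ∧ (mstate l w t).getD 1 MSym.circ = MSym.dot

/-- `(N A K, N B K)` is a cancellation pair: `N A K` is good and the displayed `A`
is its cancellation `A`-arrow (the last arrow of type (i) or (ii)). -/
def CancelPair (l : ℕ) (N K : List Bool) : Prop :=
  GoodWord l (N ++ true :: K) ∧ CSrc l (N ++ true :: K) N.length ∧
    ∀ t, N.length < t → ¬ CSrc l (N ++ true :: K) t

/-- `w` is good and has a cancellation `A`-arrow. -/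
def HasCA (l : ℕ) (w : List Bool) : Prop :=
  GoodWord l w ∧ ∃ t, w.getD t true = true ∧ CSrc l w t ∧ ∀ t', t < t' → ¬ CSrc l w t'

/-- `w` is good and has a cancellation `B`-arrow. -/
def HasCB (l : ℕ) (w : List Bool) : Prop :=
  GoodWord l w ∧ ∃ t, w.getD t true = false ∧ CSrc l w t ∧ ∀ t', t < t' → ¬ CSrc l w t'

/-- The index of the cancellation arrow. -/
def cancelIdx (l : ℕ) (w : List Bool) : ℕ :=
  sInf {t | CSrc l w t ∧ ∀ t', t < t' → ¬ CSrc l w t'}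

/-- Flip the letter at the cancellation arrow. -/
def flipCancel (l : ℕ) (w : List Bool) : List Bool :=
  (w ++ List.replicate (cancelIdx l w + 1 - w.length) true).set (cancelIdx l w) false

/-- The lattice `Λ` is `ℕ → ℤ` supported on `{0,…,l-1}`; coordinates `0,…,l-2`
are the generators `b_0,…,b_{l-2}` and coordinate `l-1` is the generator `k`.
`Ma` is the map `M_a`: `b_i ↦ b_{i+1}` (`i ≤ l-3`), `b_{l-2} ↦ k`, `k ↦ k`. -/
def Ma (l : ℕ) (v : ℕ → ℤ) : ℕ → ℤ := fun j =>
  if j = 0 then 0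
  else if j = l - 1 then v (l - 2) + v (l - 1)
  else if j < l - 1 then v (j - 1)
  else 0

/-- The map `M_b`: `b_i ↦ b_{i+1} - b_0` (`i ≤ l-3`), `b_{l-2} ↦ k - b_0`, `k ↦ k`. -/
def Mb (l : ℕ) (v : ℕ → ℤ) : ℕ → ℤ := fun j =>
  if j = 0 then -(∑ i ∈ Finset.range (l - 1), v i)
  else if j = l - 1 then v (l - 2) + v (l - 1)
  else if j < l - 1 then v (j - 1)
  else 0

/-- The representative `ī ∈ {1,…,l}` of `i` modulo `l`. -/
def ibar (l : ℕ) (i : ℤ) : ℕ := ((i - 1) % (l : ℤ)).toNat + 1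

/-- `ι_{i,j} = b_{ī-2} - b_{j̄-2} + k·δ(ī ≤ j̄)` (with `b_{-1} = 0`). -/
def iotaL (l : ℕ) (i j : ℤ) : ℕ → ℤ := fun t =>
  (if 2 ≤ ibar l i ∧ t = ibar l i - 2 then 1 else 0)
  - (if 2 ≤ ibar l j ∧ t = ibar l j - 2 then 1 else 0)
  + (if ibar l i ≤ ibar l j ∧ t = l - 1 then 1 else 0)

/-- `M_{c_1} ∘ ⋯ ∘ M_{c_m}` applied to `v`, where `c_i = a` if the `i`-th letter is
`A` (`true`) and `c_i = b` otherwise. -/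
def applyWord (l : ℕ) (w : List Bool) (v : ℕ → ℤ) : ℕ → ℤ :=
  w.foldr (fun c u => if c then Ma l u else Mb l u) v

/-- The extremal configuration of the monomial `w`:
`x_i = 0` if `C_{i+1} = A` and `x_i = M_{c_1} ∘ ⋯ ∘ M_{c_i}(b_0)` if `C_{i+1} = B`
(entries beyond the length of `w` are `0`, matching equivalence of configurations). -/
def xconf (l : ℕ) (w : List Bool) (i : ℕ) : ℕ → ℤ :=
  if w.getD i true = true then 0 else applyWord l (w.take i) (iotaL l 2 1)

/-- The `A`-arrow of the summation graph (vertices as arrays of `•` = `true`,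
`∘` = `false`). -/
def vstepA : List Bool → List Bool
  | false :: J => J ++ [false]
  | true :: _ :: J => true :: (J ++ [false])
  | v => v

/-- The `B`-arrow of the summation graph: rotation. -/
def vstepB : List Bool → List Bool
  | [] => []
  | x :: J => J ++ [x]

/-- The path associated with `w` in the summation graph, starting from
`I_top = [•,…,•]`; `vstate l w t` is the vertex `I^{(t)}`. -/
def vstate (l : ℕ) (w : List Bool) (t : ℕ) : List Bool :=
  (w.take t).foldl (fun v c => if c then vstepA v else vstepB v) (List.replicate l true)

/-- The evolution of the vector part of a simple vector under one operator. -/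
def tupStep (l : ℕ) (c : Bool) (P : ℕ → ℕ × ℕ) : ℕ → ℕ × ℕ :=
  if c then tupA P else tupB l P

/-- The vector part of `M v_∞` for a word `M`. -/
def wordTuple (l : ℕ) : List Bool → ℕ → ℕ × ℕ
  | [] => fun _ => (0, 0)
  | c :: w => tupStep l c (wordTuple l w)

/-- The scalar part of `M v_∞` for a word `M`. -/
def wordScalar (l : ℕ) : List Bool → PS
  | [] => pochInfZ⁻¹
  | c :: w =>
      Sop (wordScalar l w) *
        (if c then geomPS (wExpA l (wordTuple l w))
         else geomPS (-(wExpA l (wordTuple l w)).1, -(wExpA l (wordTuple l w)).2))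

/-- A cancellation block `𝔹_s = C_1 ⋯ C_{l+s}` with `C_1 = C_{s+2} = C_l = B`,
`C_2 = ⋯ = C_{s+1} = A`, `C_{l+1} = ⋯ = C_{l+s} = A` (0-indexed positions). -/
def IsBlock (l s : ℕ) (w : List Bool) : Prop :=
  s ≤ l - 2 ∧ w.length = l + s ∧
  w.getD 0 true = false ∧ w.getD (s + 1) true = false ∧ w.getD (l - 1) true = false ∧
  (∀ i, 1 ≤ i → i ≤ s → w.getD i true = true) ∧
  (∀ i, l ≤ i → i < l + s → w.getD i true = true)

/-- The block `𝔼_i = C_2 ⋯ C_l` where `C_j = B` iff `j ∈ {σ(1),…,σ(i)}`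
(1-based values of the permutation; `true = A`, `false = B`). -/
def Eblock (l : ℕ) (σ : Equiv.Perm (Fin l)) (i : ℕ) : List Bool :=
  (List.range (l - 1)).map fun t => decide (∀ a : Fin l, (a : ℕ) < i → (σ a : ℕ) ≠ t + 1)

/-- The word `𝔼_{l-2}^{n_{l-2}} ⋯ 𝔼_1^{n_1}`. -/
def coreWord (l : ℕ) (σ : Equiv.Perm (Fin l)) (n : ℕ → ℤ) : List Bool :=
  (((List.range (l - 2)).reverse.map fun i' =>
    (List.replicate (n (i' + 1)).toNat (Eblock l σ (i' + 1))).flatten)).flatten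

/-- The word `B^{n_{l-1}} 𝔼_{l-2}^{n_{l-2}} ⋯ 𝔼_1^{n_1}`; for `n_{l-1} < 0` the
first `-n_{l-1}` letters (which are `B`s) are removed instead. -/
def theWord (l : ℕ) (σ : Equiv.Perm (Fin l)) (n : ℕ → ℤ) : List Bool :=
  if 0 ≤ n (l - 1) then List.replicate (n (l - 1)).toNat false ++ coreWord l σ n
  else (coreWord l σ n).drop (-(n (l - 1))).toNat

/-- `σ(1) = l` and `σ(l) = 1` (in 1-based notation). -/
def SigmaCond (l : ℕ) (σ : Equiv.Perm (Fin l)) : Prop :=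
  (∀ a : Fin l, (a : ℕ) = 0 → (σ a : ℕ) = l - 1) ∧
  (∀ a : Fin l, (a : ℕ) = l - 1 → (σ a : ℕ) = 0)

/-- The conditions on `n = (n_1,…,n_{l-1})`: `n_i ≥ 0` for `i ≤ l-2`,
`n_{l-1} ≥ 2 - σ(l-1)`, `n_i > 0` whenever `σ(i) < σ(i+1)`; the unused entries
are normalized to `0`. -/
def NCond (l : ℕ) (σ : Equiv.Perm (Fin l)) (n : ℕ → ℤ) : Prop :=
  (∀ i, 1 ≤ i → i ≤ l - 2 → 0 ≤ n i) ∧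
  (∀ a : Fin l, (a : ℕ) = l - 2 → (2 : ℤ) - (((σ a : ℕ) : ℤ) + 1) ≤ n (l - 1)) ∧
  (∀ i, 1 ≤ i → i ≤ l - 1 → ∀ a b : Fin l, (a : ℕ) = i - 1 → (b : ℕ) = i →
      (σ a : ℕ) < (σ b : ℕ) → 0 < n i) ∧
  (∀ i, i = 0 ∨ l - 1 < i → n i = 0)

end

-- ================= auxiliary development =================

def fB (l c : ℕ) : ℕ := if c = l then 1 else c + 1
def fA (l c : ℕ) : ℕ := if c = 1 then 1 else if c = l then 1 else c + 1

def stp (l : ℕ) : List Bool → ℕ × ℕ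
  | [] => (2, 1)
  | c :: u => if c then (fA l (stp l u).1, fA l (stp l u).2)
              else (fB l (stp l u).1, fB l (stp l u).2)

def iop (l x y : ℕ) : ℕ → ℤ := fun t =>
  (if 2 ≤ x ∧ t = x - 2 then 1 else 0) - (if 2 ≤ y ∧ t = y - 2 then 1 else 0)
  + (if x ≤ y ∧ t = l - 1 then 1 else 0)

lemma Mb_at_zero (l : ℕ) (v : ℕ → ℤ) :
    Mb l v 0 = -(∑ i ∈ Finset.range (l - 1), v i) := by
  unfold Mb; rw [if_pos rfl]

lemma Mb_at_last (l : ℕ) (hl : 2 ≤ l) (v : ℕ → ℤ) :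
    Mb l v (l - 1) = v (l - 2) + v (l - 1) := by
  unfold Mb; rw [if_neg (by omega), if_pos rfl]

lemma Mb_at_mid (l j : ℕ) (v : ℕ → ℤ) (hj0 : j ≠ 0) (hjm : j < l - 1) :
    Mb l v j = v (j - 1) := by
  unfold Mb; rw [if_neg hj0, if_neg (by omega), if_pos hjm]

lemma Mb_at_out (l j : ℕ) (v : ℕ → ℤ) (hj0 : j ≠ 0) (hjl : j ≠ l - 1) (hjm : ¬ j < l - 1) :
    Mb l v j = 0 := by
  unfold Mb; rw [if_neg hj0, if_neg hjl, if_neg hjm]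

lemma Ma_at_zero (l : ℕ) (v : ℕ → ℤ) : Ma l v 0 = 0 := by
  unfold Ma; rw [if_pos rfl]

lemma Ma_at_last (l : ℕ) (hl : 2 ≤ l) (v : ℕ → ℤ) :
    Ma l v (l - 1) = v (l - 2) + v (l - 1) := by
  unfold Ma; rw [if_neg (by omega), if_pos rfl]

lemma Ma_at_mid (l j : ℕ) (v : ℕ → ℤ) (hj0 : j ≠ 0) (hjm : j < l - 1) :
    Ma l v j = v (j - 1) := by
  unfold Ma; rw [if_neg hj0, if_neg (by omega), if_pos hjm]

lemma Ma_at_out (l j : ℕ) (v : ℕ → ℤ) (hj0 : j ≠ 0) (hjl : j ≠ l - 1) (hjm : ¬ j < l - 1) :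
    Ma l v j = 0 := by
  unfold Ma; rw [if_neg hj0, if_neg hjl, if_neg hjm]

lemma sum_iop (l x y : ℕ) (hl : 2 ≤ l) (hx : x ≤ l) (hy : y ≤ l) :
    ∑ t ∈ Finset.range (l - 1), iop l x y t
      = (if 2 ≤ x then 1 else 0) - (if 2 ≤ y then 1 else 0) := by
  unfold iop
  rw [Finset.sum_add_distrib, Finset.sum_sub_distrib]
  have h1 : ∀ z : ℕ, z ≤ l →
      (∑ t ∈ Finset.range (l-1), (if 2 ≤ z ∧ t = z - 2 then (1:ℤ) else 0))
        = if 2 ≤ z then 1 else 0 := by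
    intro z hz
    by_cases h2 : 2 ≤ z
    · simp only [h2, true_and, if_true]
      rw [Finset.sum_ite_eq' (Finset.range (l-1)) (z-2) (fun _ => (1:ℤ))]
      have : z - 2 < l - 1 := by omega
      simp [Finset.mem_range, this]
    · simp [h2]
  rw [h1 x hx, h1 y hy]
  have h3 : (∑ t ∈ Finset.range (l-1), (if x ≤ y ∧ t = l - 1 then (1:ℤ) else 0)) = 0 := by
    apply Finset.sum_eq_zero
    intro t ht
    simp only [Finset.mem_range] at ht
    have : ¬(x ≤ y ∧ t = l - 1) := by omega
    simp [this]
  rw [h3, add_zero]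

set_option maxHeartbeats 1600000 in
lemma Mb_iop (l x y : ℕ) (hl : 2 ≤ l) (hx1 : 1 ≤ x) (hx : x ≤ l) (hy1 : 1 ≤ y) (hy : y ≤ l) :
    Mb l (iop l x y) = iop l (fB l x) (fB l y) := by
  have hfx : (x = l ∧ fB l x = 1) ∨ (x < l ∧ fB l x = x + 1) := by
    unfold fB; split_ifs <;> omega
  have hfy : (y = l ∧ fB l y = 1) ∨ (y < l ∧ fB l y = y + 1) := by
    unfold fB; split_ifs <;> omega
  funext j
  by_cases hj0 : j = 0
  · subst hj0
    rw [Mb_at_zero, sum_iop l x y hl hx hy]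
    unfold iop
    rw [if_neg (show ¬(fB l x ≤ fB l y ∧ 0 = l - 1) by omega)]
    split_ifs <;> omega
  · by_cases hjl : j = l - 1
    · subst hjl
      rw [Mb_at_last l hl]
      unfold iop
      rw [if_neg (show ¬(x ≤ y ∧ l - 2 = l - 1) by omega),
          if_neg (show ¬(2 ≤ x ∧ l - 1 = x - 2) by omega),
          if_neg (show ¬(2 ≤ y ∧ l - 1 = y - 2) by omega),
          if_neg (show ¬(2 ≤ fB l x ∧ l - 1 = fB l x - 2) by omega),
          if_neg (show ¬(2 ≤ fB l y ∧ l - 1 = fB l y - 2) by omega)]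
      split_ifs <;> omega
    · by_cases hjm : j < l - 1
      · rw [Mb_at_mid l j _ hj0 hjm]
        unfold iop
        rw [if_neg (show ¬(x ≤ y ∧ j - 1 = l - 1) by omega),
            if_neg (show ¬(fB l x ≤ fB l y ∧ j = l - 1) by omega)]
        split_ifs <;> omega
      · rw [Mb_at_out l j _ hj0 hjl hjm]
        unfold iop
        rw [if_neg (show ¬(2 ≤ fB l x ∧ j = fB l x - 2) by omega),
            if_neg (show ¬(2 ≤ fB l y ∧ j = fB l y - 2) by omega),
            if_neg (show ¬(fB l x ≤ fB l y ∧ j = l - 1) by omega)]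
        norm_num

set_option maxHeartbeats 1600000 in
lemma Ma_iop (l x y : ℕ) (hl : 2 ≤ l) (hx1 : 1 ≤ x) (hx : x ≤ l) (hy1 : 1 ≤ y) (hy : y ≤ l)
    (hd : ¬(x = 1 ∧ y = l)) :
    Ma l (iop l x y) = iop l (fA l x) (fA l y) := by
  have hfx : (x = 1 ∧ fA l x = 1) ∨ (x = l ∧ fA l x = 1) ∨ (2 ≤ x ∧ x < l ∧ fA l x = x + 1) := by
    unfold fA; split_ifs <;> omega
  have hfy : (y = 1 ∧ fA l y = 1) ∨ (y = l ∧ fA l y = 1) ∨ (2 ≤ y ∧ y < l ∧ fA l y = y + 1) := by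
    unfold fA; split_ifs <;> omega
  funext j
  by_cases hj0 : j = 0
  · subst hj0
    rw [Ma_at_zero]
    unfold iop
    rw [if_neg (show ¬(fA l x ≤ fA l y ∧ 0 = l - 1) by omega)]
    split_ifs <;> omega
  · by_cases hjl : j = l - 1
    · subst hjl
      rw [Ma_at_last l hl]
      unfold iop
      rw [if_neg (show ¬(x ≤ y ∧ l - 2 = l - 1) by omega),
          if_neg (show ¬(2 ≤ x ∧ l - 1 = x - 2) by omega),
          if_neg (show ¬(2 ≤ y ∧ l - 1 = y - 2) by omega),
          if_neg (show ¬(2 ≤ fA l x ∧ l - 1 = fA l x - 2) by omega),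
          if_neg (show ¬(2 ≤ fA l y ∧ l - 1 = fA l y - 2) by omega)]
      split_ifs <;> omega
    · by_cases hjm : j < l - 1
      · rw [Ma_at_mid l j _ hj0 hjm]
        unfold iop
        rw [if_neg (show ¬(x ≤ y ∧ j - 1 = l - 1) by omega),
            if_neg (show ¬(fA l x ≤ fA l y ∧ j = l - 1) by omega)]
        split_ifs <;> omega
      · rw [Ma_at_out l j _ hj0 hjl hjm]
        unfold iop
        rw [if_neg (show ¬(2 ≤ fA l x ∧ j = fA l x - 2) by omega),
            if_neg (show ¬(2 ≤ fA l y ∧ j = fA l y - 2) by omega),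
            if_neg (show ¬(fA l x ≤ fA l y ∧ j = l - 1) by omega)]
        norm_num

lemma iop_ne_zero (l x y : ℕ) (hl : 2 ≤ l) (hx1 : 1 ≤ x) (hx : x ≤ l) (hy1 : 1 ≤ y) (hy : y ≤ l) :
    iop l x y ≠ 0 := by
  intro h
  rcases lt_trichotomy x y with hxy | hxy | hxy
  · have hv : (if 2 ≤ x ∧ y - 2 = x - 2 then (1:ℤ) else 0)
        - (if 2 ≤ y ∧ y - 2 = y - 2 then 1 else 0)
        + (if x ≤ y ∧ y - 2 = l - 1 then 1 else 0) = 0 := congrFun h (y - 2)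
    rw [if_neg (show ¬(2 ≤ x ∧ y - 2 = x - 2) by omega),
        if_pos (show 2 ≤ y ∧ y - 2 = y - 2 from ⟨by omega, rfl⟩),
        if_neg (show ¬(x ≤ y ∧ y - 2 = l - 1) by omega)] at hv
    omega
  · have hv : (if 2 ≤ x ∧ l - 1 = x - 2 then (1:ℤ) else 0)
        - (if 2 ≤ y ∧ l - 1 = y - 2 then 1 else 0)
        + (if x ≤ y ∧ l - 1 = l - 1 then 1 else 0) = 0 := congrFun h (l - 1)
    rw [if_neg (show ¬(2 ≤ x ∧ l - 1 = x - 2) by omega),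
        if_neg (show ¬(2 ≤ y ∧ l - 1 = y - 2) by omega),
        if_pos (show x ≤ y ∧ l - 1 = l - 1 from ⟨by omega, rfl⟩)] at hv
    omega
  · have hv : (if 2 ≤ x ∧ x - 2 = x - 2 then (1:ℤ) else 0)
        - (if 2 ≤ y ∧ x - 2 = y - 2 then 1 else 0)
        + (if x ≤ y ∧ x - 2 = l - 1 then 1 else 0) = 0 := congrFun h (x - 2)
    rw [if_pos (show 2 ≤ x ∧ x - 2 = x - 2 from ⟨by omega, rfl⟩),
        if_neg (show ¬(2 ≤ y ∧ x - 2 = y - 2) by omega),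
        if_neg (show ¬(x ≤ y ∧ x - 2 = l - 1) by omega)] at hv
    omega

lemma stp_bounds (l : ℕ) (hl : 2 ≤ l) (u : List Bool) :
    1 ≤ (stp l u).1 ∧ (stp l u).1 ≤ l ∧ 1 ≤ (stp l u).2 ∧ (stp l u).2 ≤ l := by
  induction u with
  | nil => simp [stp]; omega
  | cons c u ih =>
    unfold stp fA fB
    cases c <;> simp <;> split_ifs <;> omega

lemma stp_J (l : ℕ) (hl : 2 ≤ l) (u : List Bool) (h2 : 2 ≤ (stp l u).2) :
    (stp l u).2 - 2 < u.length ∧ u.getD ((stp l u).2 - 2) true = false := by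
  induction u with
  | nil => simp [stp] at h2
  | cons c u ih =>
    have hb := stp_bounds l hl u
    have hstep : stp l (c :: u)
        = if c then (fA l (stp l u).1, fA l (stp l u).2)
          else (fB l (stp l u).1, fB l (stp l u).2) := rfl
    rw [hstep] at h2 ⊢
    cases c
    · simp only [Bool.false_eq_true, if_false] at h2 ⊢
      by_cases hyl : (stp l u).2 = l
      · exfalso; simp [fB, hyl] at h2
      · have hfb : fB l (stp l u).2 = (stp l u).2 + 1 := by simp [fB, hyl]
        rw [hfb] at h2 ⊢
        by_cases hy1 : (stp l u).2 = 1
        · rw [hy1]; simp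
        · have h2y : 2 ≤ (stp l u).2 := by omega
          obtain ⟨ihl, ihg⟩ := ih h2y
          have he : (stp l u).2 + 1 - 2 = ((stp l u).2 - 2) + 1 := by omega
          rw [he, List.getD_cons_succ]
          exact ⟨by simp only [List.length_cons]; omega, ihg⟩
    · simp only [if_true] at h2 ⊢
      by_cases hy1 : (stp l u).2 = 1
      · exfalso; simp [fA, hy1] at h2
      · by_cases hyl : (stp l u).2 = l
        · exfalso; simp [fA, hyl] at h2
        · have hfa : fA l (stp l u).2 = (stp l u).2 + 1 := by simp [fA, hy1, hyl]
          rw [hfa] at h2 ⊢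
          have h2y : 2 ≤ (stp l u).2 := by omega
          obtain ⟨ihl, ihg⟩ := ih h2y
          have he : (stp l u).2 + 1 - 2 = ((stp l u).2 - 2) + 1 := by omega
          rw [he, List.getD_cons_succ]
          exact ⟨by simp only [List.length_cons]; omega, ihg⟩

def Gc (l : ℕ) (u : List Bool) : Prop :=
  (∀ j, j + (l-1) < u.length → u.getD j true = true → u.getD (j + (l-1)) true = true) ∧
  (∀ j, j + (l-1) = u.length → u.getD j true = false)

lemma Gc_tail (l : ℕ) (c : Bool) (u : List Bool) (h : Gc l (c :: u)) : Gc l u := by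
  obtain ⟨h1, h2⟩ := h
  constructor
  · intro j hj hA
    have := h1 (j+1) (by simp only [List.length_cons]; omega) (by rwa [List.getD_cons_succ])
    rwa [show j + 1 + (l-1) = (j + (l-1)) + 1 by omega, List.getD_cons_succ] at this
  · intro j hj
    have := h2 (j+1) (by simp only [List.length_cons]; omega)
    rwa [List.getD_cons_succ] at this

lemma main_lemma (l : ℕ) (hl : 2 ≤ l) : ∀ u : List Bool, Gc l u →
    applyWord l u (iop l 2 1) = iop l (stp l u).1 (stp l u).2 := by
  intro u
  induction u with
  | nil => intro _; rfl
  | cons c u ih =>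
    intro hg
    have hgu := Gc_tail l c u hg
    have hb := stp_bounds l hl u
    have happ : applyWord l (c :: u) (iop l 2 1)
        = if c then Ma l (applyWord l u (iop l 2 1)) else Mb l (applyWord l u (iop l 2 1)) := rfl
    rw [happ, ih hgu]
    cases c
    · simp only [Bool.false_eq_true, if_false]
      rw [Mb_iop l _ _ hl hb.1 hb.2.1 hb.2.2.1 hb.2.2.2]
      rfl
    · simp only [if_true]
      have hyl : (stp l u).2 ≠ l := by
        intro hyl
        have hJ := stp_J l hl u (by omega)
        rw [hyl] at hJ
        have h1 := hg.1 0 (by simp only [List.length_cons]; omega) rfl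
        rw [show 0 + (l-1) = (l-2)+1 by omega, List.getD_cons_succ, hJ.2] at h1
        exact Bool.noConfusion h1
      rw [Ma_iop l _ _ hl hb.1 hb.2.1 hb.2.2.1 hb.2.2.2 (fun h => hyl h.2)]
      rfl


/-- If `M = C_1 ⋯ C_N` is a good monomial and `C_i = B`, then
`M_{c_1} ∘ ⋯ ∘ M_{c_{i-1}}(ι_{2,1}) ≠ 0` in `Λ`
(letters are 0-indexed: the hypothesis is about the letter at position `i`). -/
theorem stmt10 (l : ℕ) (hl : 2 ≤ l) (w : List Bool) (hw : GoodWord l w)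
    (i : ℕ) (hi : i < w.length) (hB : w.getD i true = false) :
    applyWord l (w.take i) (iotaL l 2 1) ≠ 0 := by
  have hget : ∀ j, j < i → (w.take i).getD j true = w.getD j true := by
    intro j hj
    rw [List.getD_eq_getElem?_getD, List.getD_eq_getElem?_getD, List.getElem?_take]
    simp [hj]
  have hlen : (w.take i).length = i := by
    rw [List.length_take]; omega
  have hGc : Gc l (w.take i) := by
    constructor
    · intro j hj hA
      rw [hlen] at hj
      rw [hget j (by omega)] at hA
      rw [hget _ (by omega)]
      exact hw j (by omega) hA
    · intro j hj
      rw [hlen] at hj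
      rw [hget j (by omega)]
      by_contra hc
      have hA : w.getD j true = true := by
        cases hh : w.getD j true
        · exact absurd hh hc
        · rfl
      have := hw j (by omega) hA
      rw [hj] at this
      rw [this] at hB
      exact Bool.noConfusion hB
  have hiota : iotaL l 2 1 = iop l 2 1 := by
    have h2 : ibar l 2 = 2 := by
      unfold ibar
      rw [show (2:ℤ) - 1 = 1 by ring, Int.emod_eq_of_lt (by norm_num) (by exact_mod_cast hl)]
      rfl
    have h1 : ibar l 1 = 1 := by
      unfold ibar
      norm_num
    funext t
    unfold iotaL iop
    rw [h1, h2]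
  rw [hiota, main_lemma l hl _ hGc]
  have hb := stp_bounds l hl (w.take i)
  exact iop_ne_zero l _ _ hl hb.1 hb.2.1 hb.2.2.1 hb.2.2.2
end

section
/- Suppose M = C_1 ··· C_N is a good monomial. If a monomial M' gives an extremal configuration equivalent to that of M, then M' is equivalent to M, i.e. M A^r = M' A^{r'} for some r, r' ≥ 0. -/
open Finset Filter MvPowerSeries

namespace Stmt11Aux

/-- Boundary functional initial value. -/
def beta (l : ℕ) : ℕ → ℤ := fun j => ((min j (l - 1) : ℕ) : ℤ) + 1

/-- One step of the dual evolution of the boundary functional. -/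
def stepR (l : ℕ) (c : Bool) (ρ : ℕ → ℤ) : ℕ → ℤ := fun j =>
  if j = l - 1 then ρ (l - 1)
  else if j < l - 1 then ρ (j + 1) - (if c then 0 else ρ 0)
  else 0

/-- The boundary functional after `i` steps. -/
def rho (l : ℕ) (c : ℕ → Bool) : ℕ → (ℕ → ℤ)
  | 0 => beta l
  | i + 1 => stepR l (c i) (rho l c i)

/-- The extremal value subtracted at step `t`. -/
def zval (l : ℕ) (c : ℕ → Bool) (t : ℕ) : ℤ := if c t then 0 else rho l c t 0

/-- The ceiling sequence. -/
def Bf (l m : ℕ) : ℤ := ((min m (l - 1) : ℕ) : ℤ) + 1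

lemma dot_step (m : ℕ) (ρ v : ℕ → ℤ) (b : Bool) :
    ∑ t ∈ Finset.range (m+2), ρ t * (if b then Ma (m+2) v else Mb (m+2) v) t
      = ∑ t ∈ Finset.range (m+2), stepR (m+2) b ρ t * v t := by
  have hMa : ∀ t, t < m+1 → Ma (m+2) v (t+1) = v t + (if t = m then v (m+1) else 0) := by
    intro t ht
    unfold Ma
    by_cases h : t = m
    · rw [if_neg (by omega), if_pos (by omega), if_pos h]
      have e1 : m + 2 - 2 = t := by omega
      have e2 : m + 2 - 1 = m + 1 := by omega
      rw [e1, e2]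
    · rw [if_neg (by omega), if_neg (by omega), if_pos (by omega), if_neg h]
      simp
  have hM0 : (if b then Ma (m+2) v else Mb (m+2) v) 0
      = if b then 0 else -(∑ i ∈ Finset.range (m+1), v i) := by
    cases b
    · norm_num
      unfold Mb
      rw [if_pos rfl, show m + 2 - 1 = m + 1 by omega]
    · norm_num
      simp [Ma]
  have hMB : ∀ t, t < m+1 →
      (if b then Ma (m+2) v else Mb (m+2) v) (t+1) = Ma (m+2) v (t+1) := by
    intro t ht
    cases b
    · norm_num
      unfold Mb Ma
      rw [if_neg (show ¬ (t + 1 = 0) by omega), if_neg (show ¬ (t + 1 = 0) by omega)]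
    · norm_num
  have hstep_top : stepR (m+2) b ρ (m+1) = ρ (m+1) := by
    unfold stepR
    rw [if_pos (by omega), show m + 2 - 1 = m + 1 by omega]
  have hstep_lo : ∀ t, t < m+1 → stepR (m+2) b ρ t = ρ (t+1) - (if b then 0 else ρ 0) := by
    intro t ht
    unfold stepR
    rw [if_neg (by omega), if_pos (by omega)]
  rw [Finset.sum_range_succ' (fun t => ρ t * (if b then Ma (m+2) v else Mb (m+2) v) t) (m+1)]
  rw [hM0]
  have hL : ∑ t ∈ Finset.range (m+1), ρ (t+1) * (if b then Ma (m+2) v else Mb (m+2) v) (t+1)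
      = ∑ t ∈ Finset.range (m+1), (ρ (t+1) * v t
          + (if t = m then ρ (m+1) * v (m+1) else 0)) := by
    apply Finset.sum_congr rfl
    intro t ht
    rw [Finset.mem_range] at ht
    rw [hMB t ht, hMa t ht]
    by_cases h : t = m
    · subst h; simp [mul_add]
    · simp [h]
  rw [hL, Finset.sum_add_distrib, Finset.sum_ite_eq' (Finset.range (m+1)) m
      (fun _ => ρ (m+1) * v (m+1))]
  rw [if_pos (by simp)]
  rw [Finset.sum_range_succ (fun t => stepR (m+2) b ρ t * v t) (m+1)]
  rw [hstep_top]
  have hR : ∑ t ∈ Finset.range (m+1), stepR (m+2) b ρ t * v t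
      = ∑ t ∈ Finset.range (m+1), (ρ (t+1) * v t - (if b then 0 else ρ 0) * v t) := by
    apply Finset.sum_congr rfl
    intro t ht
    rw [Finset.mem_range] at ht
    rw [hstep_lo t ht, sub_mul]
  rw [hR, Finset.sum_sub_distrib, ← Finset.mul_sum]
  cases b
  · norm_num
    try rw [Finset.mul_sum]
    ring
  · norm_num

lemma dotfold (l : ℕ) (hl : 2 ≤ l) (w : List Bool) :
    ∀ i, i ≤ w.length → ∀ v : ℕ → ℤ,
    ∑ t ∈ Finset.range l, beta l t * applyWord l (w.take i) v t
      = ∑ t ∈ Finset.range l, rho l (fun t => w.getD t true) i t * v t := by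
  intro i
  induction i with
  | zero => intro _ v; simp [applyWord, rho]
  | succ i ih =>
    intro hi v
    have hi' : i < w.length := by omega
    have htake : w.take (i+1) = w.take i ++ [w.getD i true] := by
      rw [List.take_succ, List.getElem?_eq_getElem hi', List.getD_eq_getElem w true hi']
      rfl
    have happ : applyWord l (w.take (i+1)) v
        = applyWord l (w.take i) (if w.getD i true then Ma l v else Mb l v) := by
      rw [htake]
      unfold applyWord
      rw [List.foldr_append]
      rfl
    rw [happ, ih (by omega) _]
    obtain ⟨m, rfl⟩ : ∃ m, l = m + 2 := ⟨l - 2, by omega⟩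
    exact dot_step m _ v (w.getD i true)

lemma rho_formula (l : ℕ) (hl : 2 ≤ l) (c : ℕ → Bool) :
    ∀ i j, j < l →
    rho l c i j = Bf l (i + j) - ∑ t ∈ Finset.Ico (i + j + 1 - l) i, zval l c t := by
  intro i
  induction i with
  | zero =>
    intro j hj
    have e : j + 1 - l = 0 := by omega
    show beta l j = _
    rw [zero_add, e, Finset.Ico_self, Finset.sum_empty, sub_zero]
    rfl
  | succ i ih =>
    intro j hj
    show stepR l (c i) (rho l c i) j = _
    unfold stepR
    by_cases hj1 : j = l - 1
    · rw [if_pos hj1, ih (l-1) (by omega)]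
      have e1 : i + (l-1) + 1 - l = i := by omega
      have e2 : i + 1 + j + 1 - l = i + 1 := by omega
      rw [e1, e2, Finset.Ico_self, Finset.sum_empty, Finset.Ico_self, Finset.sum_empty]
      unfold Bf
      congr 2
      omega
    · rw [if_neg hj1, if_pos (by omega), ih (j+1) (by omega)]
      have e1 : i + 1 + j + 1 - l = i + (j+1) + 1 - l := by omega
      have hle : i + (j+1) + 1 - l ≤ i := by omega
      rw [e1, Finset.sum_Ico_succ_top hle]
      have e2 : i + (j + 1) = i + 1 + j := by omega
      rw [e2]
      unfold zval
      ring

lemma rho_step0 (l : ℕ) (hl : 2 ≤ l) (c : ℕ → Bool) (i : ℕ) :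
    rho l c (i+1) 0 = rho l c i 0 + (Bf l (i+1) - Bf l i)
      + (if l ≤ i + 1 then zval l c (i+1-l) else 0) - zval l c i := by
  rw [rho_formula l hl c (i+1) 0 (by omega), rho_formula l hl c i 0 (by omega)]
  by_cases h : l ≤ i + 1
  · rw [if_pos h]
    have e1 : i + 1 + 0 + 1 - l = (i + 1 - l) + 1 := by omega
    have e2 : i + 0 + 1 - l = i + 1 - l := by omega
    rw [e1, e2]
    rw [Finset.sum_Ico_succ_top (show i + 1 - l + 1 ≤ i by omega)]
    rw [Finset.sum_eq_sum_Ico_succ_bot (show i + 1 - l < i by omega)]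
    ring
  · rw [if_neg h]
    have e1 : i + 1 + 0 + 1 - l = 0 := by omega
    have e2 : i + 0 + 1 - l = 0 := by omega
    rw [e1, e2, Finset.sum_Ico_succ_top (Nat.zero_le i)]
    ring

lemma rho_pos (l : ℕ) (hl : 2 ≤ l) (w : List Bool) (hw : GoodWord l w) :
    ∀ i, 0 < rho l (fun t => w.getD t true) i 0 := by
  set c : ℕ → Bool := fun t => w.getD t true with hc
  intro i
  induction i using Nat.strong_induction_on with
  | _ i ih =>
    match i with
    | 0 =>
      show (0:ℤ) < beta l 0
      unfold beta
      simp
    | i + 1 =>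
      rw [rho_step0 l hl c i]
      have hzge : ∀ t, t ≤ i → 0 ≤ zval l c t := by
        intro t ht
        unfold zval
        by_cases h : c t
        · rw [if_pos h]
        · rw [if_neg h]
          exact le_of_lt (ih t (by omega))
      have hBd : (0:ℤ) ≤ Bf l (i+1) - Bf l i := by
        unfold Bf
        have : min i (l-1) ≤ min (i+1) (l-1) := by omega
        have := Int.ofNat_le.mpr this
        omega
      by_cases hci : c i
      · have hz : zval l c i = 0 := by unfold zval; rw [if_pos hci]
        rw [hz]
        have h1 := ih i (by omega)
        have h2 : (0:ℤ) ≤ (if l ≤ i + 1 then zval l c (i+1-l) else 0) := by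
          by_cases h : l ≤ i + 1
          · rw [if_pos h]; exact hzge _ (by omega)
          · rw [if_neg h]
        omega
      · have hz : zval l c i = rho l c i 0 := by unfold zval; rw [if_neg hci]
        rw [hz]
        have hiw : i < w.length := by
          by_contra hh
          push_neg at hh
          apply hci
          show w.getD i true = true
          exact List.getD_eq_default w true hh
        by_cases h : l ≤ i + 1
        · rw [if_pos h]
          have hgood : ¬ c (i+1-l) := by
            intro hg
            have hA : w.getD (i+1-l) true = true := hg
            have h2 := hw (i+1-l) (by omega) hA
            rw [show i+1-l+(l-1) = i by omega] at h2
            have hci' : w.getD i true = true := h2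
            exact hci hci' 
          have hzz : zval l c (i+1-l) = rho l c (i+1-l) 0 := by
            unfold zval; rw [if_neg hgood]
          rw [hzz]
          have := ih (i+1-l) (by omega)
          omega
        · rw [if_neg h]
          have hB : Bf l (i+1) - Bf l i = 1 := by
            unfold Bf
            rw [show min (i+1) (l-1) = i+1 by omega, show min i (l-1) = i by omega]
            push_cast
            ring
          omega

lemma iota_eq (l : ℕ) (hl : 2 ≤ l) :
    iotaL l 2 1 = fun t => if t = 0 then (1:ℤ) else 0 := by
  funext t
  have h2 : ibar l 2 = 2 := by
    unfold ibar
    have : ((2:ℤ) - 1) % (l:ℤ) = 1 := by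
      rw [show (2:ℤ) - 1 = 1 by ring]
      exact Int.emod_eq_of_lt (by norm_num) (by exact_mod_cast hl)
    rw [this]
    rfl
  have h1 : ibar l 1 = 1 := by
    unfold ibar
    norm_num
  unfold iotaL
  rw [h1, h2]
  norm_num

lemma applyWord_ne (l : ℕ) (hl : 2 ≤ l) (w : List Bool) (hw : GoodWord l w)
    (i : ℕ) (hi : i ≤ w.length) :
    applyWord l (w.take i) (iotaL l 2 1) ≠ 0 := by
  intro h0
  have hd := dotfold l hl w i hi (iotaL l 2 1)
  rw [h0] at hd
  simp only [Pi.zero_apply, mul_zero, Finset.sum_const_zero] at hd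
  rw [iota_eq l hl] at hd
  have hR : ∑ t ∈ Finset.range l, rho l (fun t => w.getD t true) i t
        * (if t = 0 then (1:ℤ) else 0)
      = rho l (fun t => w.getD t true) i 0 := by
    rw [Finset.sum_eq_single 0]
    · simp
    · intro b _ hb
      rw [if_neg hb, mul_zero]
    · intro hmem
      exact absurd (Finset.mem_range.mpr (by omega)) hmem
  rw [hR] at hd
  have := rho_pos l hl w hw i
  omega

lemma getD_pad (u : List Bool) (n i : ℕ) :
    (u ++ List.replicate n true).getD i true = u.getD i true := by
  by_cases h : i < u.length
  · rw [List.getD_append _ _ _ _ h]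
  · push_neg at h
    rw [List.getD_eq_default u true h]
    by_cases h2 : i < u.length + n
    · rw [List.getD_append_right _ _ _ _ h]
      have : i - u.length < n := by omega
      rw [List.getD_eq_getElem _ _ (by simpa using this)]
      simp
    · rw [List.getD_eq_default]
      simp
      omega

lemma good_pad (l : ℕ) (w : List Bool) (hw : GoodWord l w) (n : ℕ) :
    GoodWord l (w ++ List.replicate n true) := by
  intro i hi hA
  rw [getD_pad] at hA ⊢
  by_cases h : i + (l-1) < w.length
  · exact hw i h hA
  · exact List.getD_eq_default w true (by omega)

lemma xconf_pad (l : ℕ) (u : List Bool) (n i : ℕ) :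
    xconf l (u ++ List.replicate n true) i = xconf l u i := by
  unfold xconf
  rw [getD_pad]
  by_cases h : u.getD i true = true
  · rw [if_pos h, if_pos h]
  · rw [if_neg h, if_neg h]
    have hi : i < u.length := by
      by_contra hh
      push_neg at hh
      exact h (List.getD_eq_default u true hh)
    rw [List.take_append, show i - u.length = 0 by omega,
      List.take_zero, List.append_nil]

end Stmt11Aux

/-- If `M` is a good monomial and a monomial `M'` gives an extremal configuration
equivalent to that of `M`, then `M'` is equivalent to `M`, i.e.
`M A^r = M' A^{r'}` for some `r, r' ≥ 0`. -/
theorem stmt11 (l : ℕ) (hl : 2 ≤ l) (w w' : List Bool) (hw : GoodWord l w)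
    (hconf : ∀ i, xconf l w i = xconf l w' i) :
    ∃ r r' : ℕ, w ++ List.replicate r true = w' ++ List.replicate r' true := by
  classical
  set L := max w.length w'.length with hL
  refine ⟨L - w.length, L - w'.length, ?_⟩
  set W := w ++ List.replicate (L - w.length) true with hWdef
  set W' := w' ++ List.replicate (L - w'.length) true with hW'def
  show W = W'
  have hlen : W.length = L := by
    rw [hWdef, List.length_append, List.length_replicate]
    omega
  have hlen' : W'.length = L := by
    rw [hW'def, List.length_append, List.length_replicate]
    omega
  have hgood : GoodWord l W := Stmt11Aux.good_pad l w hw _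
  have hconf2 : ∀ i, xconf l W i = xconf l W' i := by
    intro i
    rw [hWdef, hW'def, Stmt11Aux.xconf_pad, Stmt11Aux.xconf_pad]
    exact hconf i
  have key : ∀ i, W.getD i true = W'.getD i true := by
    intro i
    induction i using Nat.strong_induction_on with
    | _ i ih =>
      by_cases hiL : i < L
      · have htake : W.take i = W'.take i := by
          apply List.ext_getElem
          · rw [List.length_take, List.length_take, hlen, hlen']
          · intro n h1 h2
            rw [List.length_take, hlen] at h1
            have hn : n < i := by omega
            have := ih n hn
            rw [List.getD_eq_getElem W true (by omega),
              List.getD_eq_getElem W' true (by omega)] at this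
            rw [List.getElem_take, List.getElem_take]
            exact this
        have h1 := hconf2 i
        unfold xconf at h1
        cases hWi : W.getD i true
        · rw [hWi] at h1
          rw [if_neg (by simp)] at h1
          cases hWi' : W'.getD i true
          · rfl
          · rw [hWi'] at h1
            rw [if_pos rfl] at h1
            exact absurd h1
              (Stmt11Aux.applyWord_ne l hl W hgood i (by omega))
        · rw [hWi] at h1
          rw [if_pos rfl] at h1
          cases hWi' : W'.getD i true
          · rw [hWi'] at h1
            rw [if_neg (by simp), ← htake] at h1
            exact absurd h1.symm
              (Stmt11Aux.applyWord_ne l hl W hgood i (by omega))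
          · rfl
      · push_neg at hiL
        rw [List.getD_eq_default W true (by omega),
          List.getD_eq_default W' true (by omega)]
  apply List.ext_getElem
  · rw [hlen, hlen']
  · intro n h1 h2
    have := key n
    rwa [List.getD_eq_getElem W true h1, List.getD_eq_getElem W' true h2] at this
end

section
/- A monomial M = C_1 ··· C_m in the letters A, B is good if and only if the path associated with M in the summation graph passes through only good vertices, i.e. every vertex I^{(0)}, I^{(1)}, ..., I^{(m)} of the path contains the element 1. -/
open Finset Filter MvPowerSeries

section Proof12

private lemma length_vstepA (v : List Bool) : (vstepA v).length = v.length := by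
  match v with
  | [] => rfl
  | [true] => rfl
  | false :: J => simp [vstepA]
  | true :: x :: J => simp [vstepA]

private lemma length_vstepB (v : List Bool) : (vstepB v).length = v.length := by
  match v with
  | [] => rfl
  | x :: J => simp [vstepB]

private lemma length_fold (L : List Bool) (v : List Bool) :
    (L.foldl (fun v c => if c then vstepA v else vstepB v) v).length = v.length := by
  induction L generalizing v with
  | nil => rfl
  | cons c L ih =>
      rw [List.foldl_cons, ih]
      cases c <;> simp [length_vstepA, length_vstepB]

private lemma length_vstate (l : ℕ) (w : List Bool) (t : ℕ) :
    (vstate l w t).length = l := by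
  unfold vstate; rw [length_fold]; simp

private lemma vstate_succ (l : ℕ) (w : List Bool) (t : ℕ) (h : t < w.length) :
    vstate l w (t + 1) =
      if w.getD t true then vstepA (vstate l w t) else vstepB (vstate l w t) := by
  unfold vstate
  rw [List.take_succ, List.foldl_append, List.getElem?_eq_getElem h]
  have h2 : w.getD t true = w[t] := List.getD_eq_getElem w true h
  rw [h2]
  rfl

private lemma vstate_shape (l : ℕ) (hl : 2 ≤ l) (w : List Bool) (t : ℕ) :
    ∃ a b rest, vstate l w t = a :: b :: rest ∧ rest.length = l - 2 := by
  have h := length_vstate l w t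
  rcases hv : vstate l w t with _ | ⟨a, _ | ⟨b, rest⟩⟩ <;> rw [hv] at h <;> simp at h
  · omega
  · omega
  · exact ⟨a, b, rest, rfl, by omega⟩

private def Inv12 (l : ℕ) (w : List Bool) (t : ℕ) : Prop :=
  (vstate l w t).getD 0 false = true ∧
  ∀ j, 1 ≤ j → j < l →
    ((vstate l w t).getD j false = false ↔ l ≤ t + j ∧ w.getD (t + j - l) true = true)

private lemma inv12_zero (l : ℕ) (hl : 2 ≤ l) (w : List Bool) : Inv12 l w 0 := by
  have hrep : ∀ j, j < l → (vstate l w 0).getD j false = true := by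
    intro j hj
    show (List.replicate l true).getD j false = true
    rw [List.getD_eq_getElem _ _ (by simpa using hj), List.getElem_replicate]
  constructor
  · exact hrep 0 (by omega)
  · intro j h1 h2
    rw [hrep j h2]
    simp only [show ¬(l ≤ 0 + j) from by omega, false_and]
    simp

private lemma inv12_step (l : ℕ) (hl : 2 ≤ l) (w : List Bool) (t : ℕ) (ht : t < w.length)
    (hInv : Inv12 l w t)
    (hB : w.getD t true = false → ¬(l ≤ t + 1 ∧ w.getD (t + 1 - l) true = true)) :
    Inv12 l w (t + 1) := by
  obtain ⟨a, b, rest, hv, hrl⟩ := vstate_shape l hl w t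
  obtain ⟨h0, hj⟩ := hInv
  rw [hv] at h0
  have ha : a = true := by simpa using h0
  subst ha
  have hsucc := vstate_succ l w t ht
  cases hc : w.getD t true with
  | true =>
      rw [hc, hv] at hsucc
      have hA : vstate l w (t + 1) = true :: (rest ++ [false]) := by
        rw [hsucc]; rfl
      constructor
      · rw [hA]; rfl
      · intro j h1 h2
        obtain ⟨j', rfl⟩ : ∃ j', j = j' + 1 := ⟨j - 1, by omega⟩
        rw [hA, List.getD_cons_succ]
        by_cases hj' : j' < rest.length
        · rw [List.getD_append _ _ _ _ hj']
          have hmain := hj (j' + 2) (by omega) (by omega)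
          rw [hv] at hmain
          simp only [List.getD_cons_succ] at hmain
          have e1 : t + 1 + (j' + 1) = t + (j' + 2) := by omega
          rw [e1]
          exact hmain
        · have hj'e : j' = rest.length := by omega
          rw [List.getD_append_right _ _ _ _ (by omega)]
          have e0 : j' - rest.length = 0 := by omega
          rw [e0, List.getD_cons_zero]
          have e3 : t + 1 + (j' + 1) - l = t := by omega
          rw [e3]
          exact ⟨fun _ => ⟨by omega, hc⟩, fun _ => rfl⟩
  | false =>
      rw [hc, hv] at hsucc
      have hbA : vstate l w (t + 1) = (b :: rest) ++ [true] := by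
        rw [hsucc]
        have hb : b = true := by
          by_contra hbne
          have hbf : b = false := by
            cases b
            · rfl
            · exact absurd rfl hbne
          have := (hj 1 le_rfl (by omega)).mp (by rw [hv, hbf]; rfl)
          exact hB hc this
        subst hb
        rfl
      constructor
      · rw [hbA]
        have hb : b = true := by
          by_contra hbne
          have hbf : b = false := by
            cases b
            · rfl
            · exact absurd rfl hbne
          have := (hj 1 le_rfl (by omega)).mp (by rw [hv, hbf]; rfl)
          exact hB hc this
        rw [List.getD_append _ _ _ _ (by simp), hb]
        rfl
      · intro j h1 h2
        rw [hbA]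
        by_cases hjlt : j < l - 1
        · rw [List.getD_append _ _ _ _ (by simp; omega)]
          obtain ⟨j', rfl⟩ : ∃ j', j = j' + 1 := ⟨j - 1, by omega⟩
          have hmain := hj (j' + 2) (by omega) (by omega)
          rw [hv] at hmain
          simp only [List.getD_cons_succ] at hmain
          have e1 : t + 1 + (j' + 1) = t + (j' + 2) := by omega
          rw [e1]
          exact hmain
        · have hje : j = l - 1 := by omega
          rw [List.getD_append_right _ _ _ _ (by simp; omega)]
          have e2 : j - (b :: rest).length = 0 := by simp; omega
          rw [e2, List.getD_cons_zero]
          have e3 : t + 1 + j - l = t := by omega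
          rw [e3, hc]
          simp

private lemma inv12_of_good (l : ℕ) (hl : 2 ≤ l) (w : List Bool) (hg : GoodWord l w) :
    ∀ t, t ≤ w.length → Inv12 l w t := by
  intro t
  induction t with
  | zero => intro _; exact inv12_zero l hl w
  | succ t ih =>
      intro ht
      refine inv12_step l hl w t (by omega) (ih (by omega)) ?_
      rintro hcB ⟨hle, hA⟩
      have hgt := hg (t + 1 - l) (by omega) hA
      rw [show t + 1 - l + (l - 1) = t from by omega] at hgt
      rw [hgt] at hcB
      exact absurd hcB (by simp)

private lemma inv12_of_heads (l : ℕ) (hl : 2 ≤ l) (w : List Bool)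
    (hh : ∀ t, t ≤ w.length → (vstate l w t).getD 0 false = true) :
    ∀ t, t ≤ w.length → Inv12 l w t := by
  intro t
  induction t with
  | zero => intro _; exact inv12_zero l hl w
  | succ t ih =>
      intro ht
      refine inv12_step l hl w t (by omega) (ih (by omega)) ?_
      rintro hcB ⟨hle, hA⟩
      obtain ⟨a, b, rest, hv, hrl⟩ := vstate_shape l hl w t
      have hInv := ih (by omega)
      have hb : b = false := by
        have := (hInv.2 1 le_rfl (by omega)).mpr ⟨hle, hA⟩
        rw [hv] at this
        simpa using this
      have hsucc := vstate_succ l w t (by omega)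
      rw [hcB, hv] at hsucc
      have : vstate l w (t + 1) = (b :: rest) ++ [a] := by rw [hsucc]; rfl
      have hhead := hh (t + 1) ht
      rw [this, List.getD_append _ _ _ _ (by simp), List.getD_cons_zero, hb] at hhead
      exact absurd hhead (by simp)

end Proof12

/-- A monomial is good if and only if its path in the summation graph passes
through only good vertices (vertices containing `1`, i.e. with first entry `•`). -/
theorem stmt12 (l : ℕ) (hl : 2 ≤ l) (w : List Bool) :
    GoodWord l w ↔ ∀ t, t ≤ w.length → (vstate l w t).getD 0 false = true := by
  constructor
  · intro hg t ht
    exact (inv12_of_good l hl w hg t ht).1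
  · intro hh i hi hA
    by_contra hB
    have hB' : w.getD (i + (l - 1)) true = false := by
      cases h : w.getD (i + (l - 1)) true
      · rfl
      · exact absurd h hB
    set t := i + (l - 1) with htdef
    have hInv := inv12_of_heads l hl w hh t (by omega)
    obtain ⟨a, b, rest, hv, hrl⟩ := vstate_shape l hl w t
    have hb : b = false := by
      have := (hInv.2 1 le_rfl (by omega)).mpr ⟨by omega, ?_⟩
      · rw [hv] at this; simpa using this
      · rw [show t + 1 - l = i from by omega]; exact hA
    have hsucc := vstate_succ l w t hi
    rw [hB', hv] at hsucc
    have hst : vstate l w (t + 1) = (b :: rest) ++ [a] := by rw [hsucc]; rfl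
    have hhead := hh (t + 1) (by omega)
    rw [hst, List.getD_append _ _ _ _ (by simp), List.getD_cons_zero, hb] at hhead
    exact absurd hhead (by simp)
end

section
/- The map sending M = NAK ∈ G_A (where the displayed A is the cancellation A-arrow of M) to NBK is a bijection from G_A onto G_B; for M = NAK ∈ G_A, the monomial NBK is good and the displayed B is its cancellation B-arrow. -/
open Finset Filter MvPowerSeries

section Aux13

/-- Infinite letter sequence of a word (`true = A` beyond the length). -/
def WfL (w : List Bool) (i : ℕ) : Bool := w.getD i true

/-- Goodness in terms of the infinite letter sequence. -/
def GoodI (l : ℕ) (w : List Bool) : Prop :=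
  ∀ i, WfL w i = true → WfL w (i + (l - 1)) = true

lemma goodWord_iff_goodI (l : ℕ) (w : List Bool) : GoodWord l w ↔ GoodI l w := by
  constructor
  · intro h i hi
    by_cases hlen : i + (l - 1) < w.length
    · exact h i hlen hi
    · show w.getD _ true = true
      rw [List.getD_eq_default _ _ (not_lt.mp hlen)]
  · intro h i _ hi
    exact h i hi

lemma getD_new {J : List MSym} {l : ℕ} (hJ : J.length + 2 = l) (a b : MSym) (q : ℕ) :
    (a :: (J ++ [b])).getD q MSym.circ =
      if q = 0 then a
      else if q < l - 1 then J.getD (q - 1) MSym.circ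
      else if q = l - 1 then b
      else MSym.circ := by
  cases q with
  | zero => rfl
  | succ q =>
    rw [List.getD_cons_succ]
    by_cases h1 : q < J.length
    · rw [List.getD_append _ _ _ _ h1, if_neg (Nat.succ_ne_zero q), if_pos (by omega)]
      simp only [Nat.add_sub_cancel]
    · by_cases h2 : q = J.length
      · rw [List.getD_append_right _ _ _ _ (by omega), if_neg (Nat.succ_ne_zero q),
          if_neg (by omega), if_pos (by omega)]
        rw [h2, Nat.sub_self]
        rfl
      · rw [List.getD_eq_default _ _ (by simp; omega), if_neg (Nat.succ_ne_zero q),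
          if_neg (by omega), if_neg (by omega)]

lemma getD_old {J : List MSym} {l : ℕ} (hJ : J.length + 2 = l) (x y : MSym) (q : ℕ) :
    (x :: y :: J).getD q MSym.circ =
      if q = 0 then x
      else if q = 1 then y
      else if q < l then J.getD (q - 2) MSym.circ
      else MSym.circ := by
  match q with
  | 0 => rfl
  | 1 => rfl
  | (q+2) =>
    rw [List.getD_cons_succ, List.getD_cons_succ]
    by_cases h : q < J.length
    · rw [if_neg (by omega), if_neg (by omega), if_pos (by omega)]
      simp only [Nat.add_sub_cancel]
    · rw [List.getD_eq_default _ _ (by omega), if_neg (by omega), if_neg (by omega),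
        if_neg (by omega)]

lemma stepB_cons (x : MSym) (J : List MSym) : stepB (x :: J) = J ++ [x] := rfl
lemma stepA_circ (J : List MSym) : stepA (MSym.circ :: J) = J ++ [MSym.circ] := rfl
lemma stepA_dot (y : MSym) (J : List MSym) :
    stepA (MSym.dot :: y :: J) = MSym.dot :: (J ++ [MSym.circ]) := rfl
lemma stepA_mark_dot (J : List MSym) :
    stepA (MSym.mark :: MSym.dot :: J) = MSym.dot :: (J ++ [MSym.circ]) := rfl
lemma stepA_mark_circ (J : List MSym) :
    stepA (MSym.mark :: MSym.circ :: J) = MSym.mark :: (J ++ [MSym.circ]) := rfl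
lemma stepA_mark_mark (J : List MSym) :
    stepA (MSym.mark :: MSym.mark :: J) = MSym.dot :: (J ++ [MSym.circ]) := rfl

lemma exists_cons2 {l : ℕ} (hl : 2 ≤ l) {v : List MSym} (hv : v.length = l) :
    ∃ x y J, v = x :: y :: J ∧ J.length + 2 = l := by
  match v, hv with
  | x :: y :: J, hv => exact ⟨x, y, J, rfl, by simpa using hv⟩
  | [], hv => simp at hv; omega
  | [x], hv => simp at hv; omega

lemma mstate_succ (l : ℕ) (w : List Bool) (t : ℕ) :
    mstate l w (t+1) = (if WfL w t = true then stepA else stepB) (mstate l w t) := rfl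

lemma mstate_length {l : ℕ} (hl : 2 ≤ l) (w : List Bool) (t : ℕ) :
    (mstate l w t).length = l := by
  induction t with
  | zero =>
    show (List.replicate (l-1) MSym.dot ++ [MSym.mark]).length = l
    simp; omega
  | succ t ih =>
    obtain ⟨x, y, J, hv, hJ⟩ := exists_cons2 hl ih
    rw [mstate_succ, hv]
    by_cases hc : WfL w t = true
    · rw [if_pos hc]
      cases x <;> cases y <;>
        simp [stepA_circ, stepA_dot, stepA_mark_dot, stepA_mark_circ, stepA_mark_mark] <;> omega
    · rw [if_neg hc, stepB_cons]
      simp; omega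

lemma mstate_congr {l : ℕ} {w w' : List Bool} {t : ℕ}
    (h : ∀ s, s < t → WfL w s = WfL w' s) : mstate l w t = mstate l w' t := by
  induction t with
  | zero => rfl
  | succ t ih =>
    rw [mstate_succ, mstate_succ, h t (Nat.lt_succ_self t),
      ih (fun s hs => h s (by omega))]


lemma stInv {l : ℕ} (hl : 2 ≤ l) {w : List Bool} (hg : GoodI l w) (t : ℕ) :
    (mstate l w t).getD 0 MSym.circ ≠ MSym.circ ∧
      ∀ j, 1 ≤ j → j < l →
        ((mstate l w t).getD j MSym.circ = MSym.circ ↔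
          (l ≤ t + j ∧ WfL w (t + j - l) = true)) := by
  induction t with
  | zero =>
    have hrep : mstate l w 0 = MSym.dot :: (List.replicate (l-2) MSym.dot ++ [MSym.mark]) := by
      show List.replicate (l-1) MSym.dot ++ [MSym.mark] = _
      have : l - 1 = (l-2) + 1 := by omega
      rw [this, List.replicate_succ, List.cons_append]
    have hJ : (List.replicate (l-2) MSym.dot).length + 2 = l := by simp; omega
    constructor
    · rw [hrep, getD_new hJ]
      simp
    · intro j hj1 hjl
      rw [hrep, getD_new hJ]
      have hrd : ∀ r, r < l - 2 → (List.replicate (l-2) MSym.dot).getD r MSym.circ ≠ MSym.circ := by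
        intro r hr
        rw [List.getD_eq_getElem?_getD, List.getElem?_replicate, if_pos hr]
        simp
      constructor
      · intro hcir
        exfalso
        rw [if_neg (by omega)] at hcir
        by_cases h2 : j < l - 1
        · rw [if_pos h2] at hcir; exact hrd _ (by omega) hcir
        · rw [if_neg h2, if_pos (by omega)] at hcir; exact MSym.noConfusion hcir
      · rintro ⟨h1, -⟩; omega
  | succ t ih =>
    obtain ⟨h0, h1⟩ := ih
    have hv := mstate_length hl w t
    obtain ⟨x, y, J, hxy, hJ⟩ := exists_cons2 hl hv
    have hx : (mstate l w t).getD 0 MSym.circ = x := by rw [hxy]; rfl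
    have hy : (mstate l w t).getD 1 MSym.circ = y := by rw [hxy]; rfl
    have key : ∃ a b, mstate l w (t+1) = a :: (J ++ [b]) ∧ a ≠ MSym.circ ∧
        ((b = MSym.circ) ↔ WfL w t = true) := by
      cases hc : WfL w t with
      | false =>
        have hyne : y ≠ MSym.circ := by
          intro hyc
          have := (h1 1 le_rfl (by omega)).mp (by rw [hy, hyc])
          have h2 := hg _ this.2
          have : t + 1 - l + (l - 1) = t := by omega
          rw [this] at h2
          rw [h2] at hc
          exact Bool.noConfusion hc
        refine ⟨y, x, ?_, hyne, ?_⟩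
        · rw [mstate_succ, if_neg (by simp [hc]), hxy, stepB_cons, List.cons_append]
        · constructor
          · intro hxc; exact absurd (hx ▸ hxc) h0
          · intro h; exact Bool.noConfusion h
      | true =>
        rw [mstate_succ, if_pos hc, hxy]
        have hxne : x ≠ MSym.circ := fun hxc => h0 (hx ▸ hxc)
        cases x with
        | circ => exact absurd rfl hxne
        | dot =>
          exact ⟨MSym.dot, MSym.circ, by rw [stepA_dot], by simp, by simp [hc]⟩
        | mark =>
          cases y with
          | dot => exact ⟨MSym.dot, MSym.circ, by rw [stepA_mark_dot], by simp, by simp [hc]⟩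
          | circ => exact ⟨MSym.mark, MSym.circ, by rw [stepA_mark_circ], by simp, by simp [hc]⟩
          | mark => exact ⟨MSym.dot, MSym.circ, by rw [stepA_mark_mark], by simp, by simp [hc]⟩
    obtain ⟨a, b, hnew, ha, hb⟩ := key
    constructor
    · rw [hnew, getD_new hJ, if_pos rfl]; exact ha
    · intro j hj1 hjl
      rw [hnew, getD_new hJ, if_neg (by omega)]
      by_cases hj2 : j < l - 1
      · rw [if_pos hj2]
        have hold := h1 (j+1) (by omega) (by omega)
        have : (mstate l w t).getD (j+1) MSym.circ = J.getD (j-1) MSym.circ := by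
          rw [hxy, getD_old hJ, if_neg (by omega), if_neg (by omega), if_pos (by omega)]
          congr 1
        rw [this] at hold
        rw [hold]
        constructor
        · rintro ⟨hh1, hh2⟩
          refine ⟨by omega, ?_⟩
          have : t + (j+1) - l = t + 1 + j - l := by omega
          rwa [this] at hh2
        · rintro ⟨hh1, hh2⟩
          refine ⟨by omega, ?_⟩
          have : t + 1 + j - l = t + (j+1) - l := by omega
          rwa [this] at hh2
      · rw [if_neg hj2, if_pos (by omega)]
        have hjeq : j = l - 1 := by omega
        have harith : t + 1 + j - l = t := by omega
        rw [harith]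
        constructor
        · intro hbc; exact ⟨by omega, hb.mp hbc⟩
        · rintro ⟨-, hh⟩; exact hb.mpr hh


/-- The state contains no mark. -/
def NoMark (v : List MSym) : Prop := ∀ q, v.getD q MSym.circ ≠ MSym.mark

/-- The state has its unique mark at position `p`. -/
def AtOne (v : List MSym) (p : ℕ) : Prop :=
  v.getD p MSym.circ = MSym.mark ∧ ∀ q, q ≠ p → v.getD q MSym.circ ≠ MSym.mark

lemma atOne_lt {l : ℕ} {v : List MSym} {p : ℕ} (hv : v.length = l) (h : AtOne v p) :
    p < l := by
  by_contra hp
  have := h.1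
  rw [List.getD_eq_default _ _ (by omega)] at this
  exact MSym.noConfusion this

section MarkSteps

variable {l : ℕ} (hl : 2 ≤ l) {v : List MSym} (hv : v.length = l)

include hl hv

lemma noMark_stepB (h : NoMark v) : NoMark (stepB v) := by
  obtain ⟨x, y, J, rfl, hJ⟩ := exists_cons2 hl hv
  have hmid : ∀ r, J.getD r MSym.circ ≠ MSym.mark := by
    intro r
    have := h (r+2)
    rwa [List.getD_cons_succ, List.getD_cons_succ] at this
  intro q
  rw [stepB_cons, List.cons_append, getD_new hJ]
  split_ifs
  · exact h 1
  · exact hmid _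
  · exact h 0
  · simp

lemma noMark_stepA (h : NoMark v) : NoMark (stepA v) := by
  obtain ⟨x, y, J, rfl, hJ⟩ := exists_cons2 hl hv
  have hmid : ∀ r, J.getD r MSym.circ ≠ MSym.mark := by
    intro r
    have := h (r+2)
    rwa [List.getD_cons_succ, List.getD_cons_succ] at this
  have hx := h 0
  intro q
  cases x with
  | mark => exact absurd rfl hx
  | dot =>
    rw [stepA_dot, getD_new hJ]
    split_ifs
    · simp
    · exact hmid _
    · simp
    · simp
  | circ =>
    rw [stepA_circ, List.cons_append, getD_new hJ]
    split_ifs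
    · exact h 1
    · exact hmid _
    · simp
    · simp

lemma atOne_stepB_zero (h : AtOne v 0) : AtOne (stepB v) (l - 1) := by
  obtain ⟨x, y, J, rfl, hJ⟩ := exists_cons2 hl hv
  have hmid : ∀ r, J.getD r MSym.circ ≠ MSym.mark := by
    intro r
    have := h.2 (r+2) (by omega)
    rwa [List.getD_cons_succ, List.getD_cons_succ] at this
  rw [stepB_cons, List.cons_append]
  constructor
  · rw [getD_new hJ, if_neg (by omega), if_neg (by omega), if_pos rfl]
    exact h.1
  · intro q hq
    rw [getD_new hJ]
    split_ifs
    · exact h.2 1 (by omega)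
    · exact hmid _
    · simp

lemma atOne_stepB_pos {p : ℕ} (h : AtOne v p) (hp : 1 ≤ p) : AtOne (stepB v) (p - 1) := by
  obtain ⟨x, y, J, rfl, hJ⟩ := exists_cons2 hl hv
  have hplt : p < l := atOne_lt hv h
  have hmid : ∀ r, r + 2 ≠ p → J.getD r MSym.circ ≠ MSym.mark := by
    intro r hr
    have := h.2 (r+2) hr
    rwa [List.getD_cons_succ, List.getD_cons_succ] at this
  rw [stepB_cons, List.cons_append]
  constructor
  · rcases eq_or_lt_of_le hp with hp1 | hp2
    · rw [getD_new hJ, if_pos (by omega)]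
      have := h.1
      rw [← hp1] at this
      exact this
    · rw [getD_new hJ, if_neg (by omega), if_pos (by omega)]
      have := h.1
      rw [getD_old hJ, if_neg (by omega), if_neg (by omega), if_pos hplt] at this
      have e : p - 1 - 1 = p - 2 := by omega
      rw [e]
      exact this
  · intro q hq
    rw [getD_new hJ]
    split_ifs
    · exact h.2 1 (by omega)
    · exact hmid _ (by omega)
    · exact h.2 0 (by omega)
    · simp

lemma atOne_stepA_ge2 {p : ℕ} (h : AtOne v p) (hp : 2 ≤ p) : AtOne (stepA v) (p - 1) := by
  obtain ⟨x, y, J, rfl, hJ⟩ := exists_cons2 hl hv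
  have hplt : p < l := atOne_lt hv h
  have hmid : ∀ r, r + 2 ≠ p → J.getD r MSym.circ ≠ MSym.mark := by
    intro r hr
    have := h.2 (r+2) hr
    rwa [List.getD_cons_succ, List.getD_cons_succ] at this
  have hmark : J.getD (p - 2) MSym.circ = MSym.mark := by
    have := h.1
    rwa [getD_old hJ, if_neg (by omega), if_neg (by omega), if_pos hplt] at this
  have hx := h.2 0 (by omega)
  have hy := h.2 1 (by omega)
  have goal : ∀ a, a ≠ MSym.mark → AtOne (a :: (J ++ [MSym.circ])) (p - 1) := by
    intro a haa
    constructor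
    · rw [getD_new hJ, if_neg (by omega), if_pos (by omega)]
      have e : p - 1 - 1 = p - 2 := by omega
      rw [e]
      exact hmark
    · intro q hq
      rw [getD_new hJ]
      split_ifs
      · exact haa
      · exact hmid _ (by omega)
      · simp
      · simp
  cases x with
  | mark => exact absurd rfl hx
  | dot => rw [stepA_dot]; exact goal _ (by simp)
  | circ =>
    rw [stepA_circ, List.cons_append]
    exact goal _ hy

lemma atOne_stepA_one (h : AtOne v 1) :
    (v.getD 0 MSym.circ = MSym.dot → NoMark (stepA v)) ∧
    (v.getD 0 MSym.circ = MSym.circ → AtOne (stepA v) 0) := by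
  obtain ⟨x, y, J, rfl, hJ⟩ := exists_cons2 hl hv
  have hmid : ∀ r, J.getD r MSym.circ ≠ MSym.mark := by
    intro r
    have := h.2 (r+2) (by omega)
    rwa [List.getD_cons_succ, List.getD_cons_succ] at this
  have hymark : y = MSym.mark := h.1
  constructor
  · intro hx0
    have hx : x = MSym.dot := hx0
    subst hx hymark
    rw [stepA_dot]
    intro q
    rw [getD_new hJ]
    split_ifs
    · simp
    · exact hmid _
    · simp
    · simp
  · intro hx0
    have hx : x = MSym.circ := hx0
    subst hx hymark
    rw [stepA_circ, List.cons_append]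
    constructor
    · rw [getD_new hJ, if_pos rfl]
    · intro q hq
      rw [getD_new hJ]
      split_ifs
      · omega
      · exact hmid _
      · simp
      · simp

lemma atOne_stepA_zero (h : AtOne v 0) :
    (v.getD 1 MSym.circ = MSym.dot → NoMark (stepA v)) ∧
    (v.getD 1 MSym.circ = MSym.circ → AtOne (stepA v) 0) := by
  obtain ⟨x, y, J, rfl, hJ⟩ := exists_cons2 hl hv
  have hmid : ∀ r, J.getD r MSym.circ ≠ MSym.mark := by
    intro r
    have := h.2 (r+2) (by omega)
    rwa [List.getD_cons_succ, List.getD_cons_succ] at this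
  have hxmark : x = MSym.mark := h.1
  subst hxmark
  constructor
  · intro hy0
    have hy : y = MSym.dot := hy0
    subst hy
    rw [stepA_mark_dot]
    intro q
    rw [getD_new hJ]
    split_ifs
    · simp
    · exact hmid _
    · simp
    · simp
  · intro hy0
    have hy : y = MSym.circ := hy0
    subst hy
    rw [stepA_mark_circ]
    constructor
    · rw [getD_new hJ, if_pos rfl]
    · intro q hq
      rw [getD_new hJ]
      split_ifs
      · omega
      · exact hmid _
      · simp
      · simp

end MarkSteps

lemma inv_all {l : ℕ} (hl : 2 ≤ l) (w : List Bool) (t : ℕ) :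
    NoMark (mstate l w t) ∨ ∃ p, AtOne (mstate l w t) p := by
  induction t with
  | zero =>
    right
    refine ⟨l - 1, ?_, ?_⟩
    · show (List.replicate (l-1) MSym.dot ++ [MSym.mark]).getD (l-1) MSym.circ = MSym.mark
      rw [List.getD_append_right _ _ _ _ (by simp), List.length_replicate, Nat.sub_self]
      rfl
    · intro q hq
      show (List.replicate (l-1) MSym.dot ++ [MSym.mark]).getD q MSym.circ ≠ MSym.mark
      by_cases h1 : q < l - 1
      · rw [List.getD_append _ _ _ _ (by simpa using h1), List.getD_eq_getElem?_getD,
          List.getElem?_replicate, if_pos h1]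
        simp
      · rw [List.getD_eq_default _ _ (by simp; omega)]
        simp
  | succ t ih =>
    have hv := mstate_length hl w t
    rw [mstate_succ]
    by_cases hc : WfL w t = true
    · rw [if_pos hc]
      rcases ih with hn | ⟨p, hp⟩
      · exact Or.inl (noMark_stepA hl hv hn)
      · match p, hp with
        | 0, hp =>
          cases hy : (mstate l w t).getD 1 MSym.circ with
          | mark => exact absurd hy (hp.2 1 (by omega))
          | dot => exact Or.inl ((atOne_stepA_zero hl hv hp).1 hy)
          | circ => exact Or.inr ⟨0, (atOne_stepA_zero hl hv hp).2 hy⟩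
        | 1, hp =>
          cases hx : (mstate l w t).getD 0 MSym.circ with
          | mark => exact absurd hx (hp.2 0 (by omega))
          | dot => exact Or.inl ((atOne_stepA_one hl hv hp).1 hx)
          | circ => exact Or.inr ⟨0, (atOne_stepA_one hl hv hp).2 hx⟩
        | (p+2), hp => exact Or.inr ⟨p+1, atOne_stepA_ge2 hl hv hp (by omega)⟩
    · rw [if_neg hc]
      rcases ih with hn | ⟨p, hp⟩
      · exact Or.inl (noMark_stepB hl hv hn)
      · rcases Nat.eq_zero_or_pos p with rfl | hp1
        · exact Or.inr ⟨l - 1, atOne_stepB_zero hl hv hp⟩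
        · exact Or.inr ⟨p - 1, atOne_stepB_pos hl hv hp hp1⟩

lemma csrc_atOne {l : ℕ} (hl : 2 ≤ l) {w : List Bool} {t : ℕ} (h : CSrc l w t) :
    AtOne (mstate l w t) 0 := by
  rcases inv_all hl w t with hn | ⟨p, hp⟩
  · exact absurd h.1 (hn 0)
  · rcases eq_or_ne p 0 with rfl | hne
    · exact hp
    · exact absurd h.1 (hp.2 0 (Ne.symm hne))

lemma noMark_forever {l : ℕ} (hl : 2 ≤ l) {w : List Bool} {t : ℕ}
    (h : NoMark (mstate l w t)) : ∀ s, t ≤ s → NoMark (mstate l w s) := by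
  intro s hs
  obtain ⟨d, rfl⟩ : ∃ d, s = t + d := ⟨s - t, by omega⟩
  clear hs
  induction d with
  | zero => exact h
  | succ d ih =>
    have e : t + (d+1) = (t + d) + 1 := by omega
    rw [e, mstate_succ]
    have hv := mstate_length hl w (t+d)
    by_cases hc : WfL w (t+d) = true
    · rw [if_pos hc]; exact noMark_stepA hl hv ih
    · rw [if_neg hc]; exact noMark_stepB hl hv ih

lemma not_csrc_of_noMark {l : ℕ} {w : List Bool} {t : ℕ}
    (h : NoMark (mstate l w t)) : ¬ CSrc l w t := fun hc => h 0 hc.1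

lemma not_csrc_of_atOne_pos {l : ℕ} {w : List Bool} {t p : ℕ}
    (h : AtOne (mstate l w t) p) (hp : p ≠ 0) : ¬ CSrc l w t :=
  fun hc => h.2 0 (fun e => hp e.symm) hc.1

lemma descent {l : ℕ} (hl : 2 ≤ l) {w : List Bool} {t : ℕ}
    (h : AtOne (mstate l w t) (l - 1)) :
    ∀ s, s ≤ l - 2 → AtOne (mstate l w (t + s)) (l - 1 - s) := by
  intro s
  induction s with
  | zero => intro _; simpa using h
  | succ s ih =>
    intro hs
    have h1 := ih (by omega)
    have hp : 2 ≤ l - 1 - s := by omega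
    have e : t + (s+1) = (t + s) + 1 := by omega
    have e2 : l - 1 - (s+1) = (l - 1 - s) - 1 := by omega
    rw [e, e2, mstate_succ]
    have hv := mstate_length hl w (t+s)
    by_cases hc : WfL w (t+s) = true
    · rw [if_pos hc]; exact atOne_stepA_ge2 hl hv h1 hp
    · rw [if_neg hc]; exact atOne_stepB_pos hl hv h1 (by omega)


/-- Flipping the cancellation `A`-arrow to `B`. -/
lemma lemAB {l : ℕ} (hl : 2 ≤ l) {w w' : List Bool} {n : ℕ}
    (hg : GoodI l w) (hcs : CSrc l w n) (hA : WfL w n = true)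
    (hw' : ∀ i, WfL w' i = if i = n then false else WfL w i) :
    GoodI l w' ∧ CSrc l w' n ∧ ∀ t, n < t → ¬ CSrc l w' t := by
  have agree : mstate l w' n = mstate l w n :=
    mstate_congr (fun s hs => by rw [hw' s, if_neg (by omega)])
  have hsec : (mstate l w n).getD 1 MSym.circ = MSym.dot := hcs.2
  have hnB : l ≤ n + 1 → WfL w (n + 1 - l) = false := by
    intro hln
    by_contra hB
    have : (mstate l w n).getD 1 MSym.circ = MSym.circ :=
      ((stInv hl hg n).2 1 le_rfl (by omega)).mpr ⟨hln, by simpa using hB⟩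
    rw [hsec] at this
    exact MSym.noConfusion this
  have hgood' : GoodI l w' := by
    intro i hi
    have hine : i ≠ n := by
      intro he
      rw [hw' i, if_pos he] at hi
      exact Bool.noConfusion hi
    rw [hw' i, if_neg hine] at hi
    by_cases hin : i + (l - 1) = n
    · exfalso
      have h1 : l ≤ n + 1 := by omega
      have h2 : i = n + 1 - l := by omega
      rw [h2, hnB h1] at hi
      exact Bool.noConfusion hi
    · rw [hw' _, if_neg hin]
      exact hg i hi
  refine ⟨hgood', ⟨by rw [agree]; exact hcs.1, by rw [agree]; exact hcs.2⟩, ?_⟩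
  have hat0 : AtOne (mstate l w' n) 0 := by
    rw [agree]; exact csrc_atOne hl hcs
  have hstep1 : AtOne (mstate l w' (n+1)) (l - 1) := by
    rw [mstate_succ, if_neg (by rw [hw' n, if_pos rfl]; simp)]
    exact atOne_stepB_zero hl (mstate_length hl w' n) hat0
  have hdesc := descent hl hstep1
  have hat1 : AtOne (mstate l w' (n + l - 1)) 1 := by
    have := hdesc (l - 2) le_rfl
    have e1 : n + 1 + (l - 2) = n + l - 1 := by omega
    have e2 : l - 1 - (l - 2) = 1 := by omega
    rwa [e1, e2] at this
  have hlet : WfL w' (n + l - 1) = true := by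
    rw [hw' _, if_neg (by omega)]
    have := hg n hA
    have e : n + (l - 1) = n + l - 1 := by omega
    rwa [e] at this
  have hdead : NoMark (mstate l w' (n + l)) := by
    have hx : (mstate l w' (n + l - 1)).getD 0 MSym.circ = MSym.dot := by
      cases hx0 : (mstate l w' (n + l - 1)).getD 0 MSym.circ with
      | dot => rfl
      | circ => exact absurd hx0 (stInv hl hgood' (n + l - 1)).1
      | mark => exact absurd hx0 (hat1.2 0 (by omega))
    have e : n + l = (n + l - 1) + 1 := by omega
    rw [e, mstate_succ, if_pos hlet]
    exact (atOne_stepA_one hl (mstate_length hl w' _) hat1).1 hx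
  intro t ht
  by_cases htl : n + l ≤ t
  · exact not_csrc_of_noMark (noMark_forever hl hdead t htl)
  · have hs : t - (n+1) ≤ l - 2 := by omega
    have := hdesc (t - (n+1)) hs
    have e : n + 1 + (t - (n+1)) = t := by omega
    rw [e] at this
    exact not_csrc_of_atOne_pos this (by omega)

/-- Flipping the cancellation `B`-arrow to `A`. -/
lemma lemBA {l : ℕ} (hl : 2 ≤ l) {w w' : List Bool} {n : ℕ}
    (hg' : GoodI l w') (hcs : CSrc l w' n) (hB : WfL w' n = false)
    (hno : ∀ t, n < t → ¬ CSrc l w' t)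
    (hw : ∀ i, WfL w i = if i = n then true else WfL w' i) :
    GoodI l w ∧ CSrc l w n ∧ (∀ t, n < t → ¬ CSrc l w t) ∧ WfL w n = true := by
  have agree : mstate l w n = mstate l w' n :=
    mstate_congr (fun s hs => by rw [hw s, if_neg (by omega)])
  have hat0 : AtOne (mstate l w' n) 0 := csrc_atOne hl hcs
  have hkey : WfL w' (n + (l - 1)) = true := by
    by_contra hkf
    have hkf' : WfL w' (n + l - 1) = false := by
      have e : n + l - 1 = n + (l - 1) := by omega
      rw [e]
      simpa using hkf
    have hstep1 : AtOne (mstate l w' (n+1)) (l - 1) := by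
      rw [mstate_succ, if_neg (by rw [hB]; simp)]
      exact atOne_stepB_zero hl (mstate_length hl w' n) hat0
    have hdesc := descent hl hstep1
    have hat1 : AtOne (mstate l w' (n + l - 1)) 1 := by
      have := hdesc (l - 2) le_rfl
      have e1 : n + 1 + (l - 2) = n + l - 1 := by omega
      have e2 : l - 1 - (l - 2) = 1 := by omega
      rwa [e1, e2] at this
    have hback : AtOne (mstate l w' (n + l)) 0 := by
      have e : n + l = (n + l - 1) + 1 := by omega
      rw [e, mstate_succ, if_neg (by rw [hkf']; simp)]
      exact atOne_stepB_pos hl (mstate_length hl w' _) hat1 le_rfl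
    have hex : ∃ j, 1 ≤ j ∧ WfL w' (n + j) = false := by
      refine ⟨l - 1, by omega, ?_⟩
      have e : n + (l-1) = n + l - 1 := by omega
      rw [e]; exact hkf'
    classical
    obtain ⟨hj1, hjB⟩ := Nat.find_spec hex
    set j := Nat.find hex with hjdef
    have hjmin : ∀ i, i < j → ¬(1 ≤ i ∧ WfL w' (n + i) = false) :=
      fun i hi => Nat.find_min hex hi
    have hstay : ∀ s, s ≤ j - 1 → AtOne (mstate l w' (n + l + s)) 0 := by
      intro s
      induction s with
      | zero => intro _; simpa using hback
      | succ s ih =>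
        intro hs
        have h0 := ih (by omega)
        have hAs : WfL w' (n + s + 1) = true := by
          by_contra hf
          exact hjmin (s+1) (by omega) ⟨by omega, by rw [← Nat.add_assoc]; simpa using hf⟩
        have hcirc : (mstate l w' (n + l + s)).getD 1 MSym.circ = MSym.circ := by
          apply ((stInv hl hg' (n+l+s)).2 1 le_rfl (by omega)).mpr
          refine ⟨by omega, ?_⟩
          have e : n + l + s + 1 - l = n + s + 1 := by omega
          rw [e]; exact hAs
        have hlets : WfL w' (n + l + s) = true := by
          have := hg' (n + s + 1) hAs
          have e : n + s + 1 + (l - 1) = n + l + s := by omega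
          rwa [e] at this
        have e : n + l + (s+1) = (n + l + s) + 1 := by omega
        rw [e, mstate_succ, if_pos hlets]
        exact (atOne_stepA_zero hl (mstate_length hl w' _) h0).2 hcirc
    have hT := hstay (j-1) le_rfl
    have hcsT : CSrc l w' (n + l + (j - 1)) := by
      refine ⟨hT.1, ?_⟩
      have hnotc : (mstate l w' (n + l + (j-1))).getD 1 MSym.circ ≠ MSym.circ := by
        intro hc
        have := ((stInv hl hg' (n+l+(j-1))).2 1 le_rfl (by omega)).mp hc
        have e : n + l + (j-1) + 1 - l = n + j := by omega
        rw [e] at this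
        rw [this.2] at hjB
        exact Bool.noConfusion hjB
      have hnotm : (mstate l w' (n + l + (j-1))).getD 1 MSym.circ ≠ MSym.mark :=
        hT.2 1 (by omega)
      cases hval : (mstate l w' (n + l + (j-1))).getD 1 MSym.circ with
      | dot => rfl
      | circ => exact absurd hval hnotc
      | mark => exact absurd hval hnotm
    exact hno _ (by omega) hcsT
  have hgood : GoodI l w := by
    intro i hi
    by_cases hin : i = n
    · subst hin
      rw [hw _, if_neg (by omega)]
      exact hkey
    · rw [hw i, if_neg hin] at hi
      have h2 := hg' i hi
      have hne2 : i + (l - 1) ≠ n := by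
        intro he
        rw [he, hB] at h2
        exact Bool.noConfusion h2
      rw [hw _, if_neg hne2]
      exact h2
  have hletn : WfL w n = true := by rw [hw n, if_pos rfl]
  have hcsw : CSrc l w n := ⟨by rw [agree]; exact hcs.1, by rw [agree]; exact hcs.2⟩
  refine ⟨hgood, hcsw, ?_, hletn⟩
  have hdead : NoMark (mstate l w (n+1)) := by
    rw [mstate_succ, if_pos hletn]
    have hat0w : AtOne (mstate l w n) 0 := by rw [agree]; exact hat0
    have hsecw : (mstate l w n).getD 1 MSym.circ = MSym.dot := by rw [agree]; exact hcs.2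
    exact (atOne_stepA_zero hl (mstate_length hl w n) hat0w).1 hsecw
  intro t ht
  exact not_csrc_of_noMark (noMark_forever hl hdead t (by omega))


lemma wfL_append_cons (N K : List Bool) (c : Bool) : WfL (N ++ c :: K) N.length = c := by
  show (N ++ c :: K).getD N.length true = c
  rw [List.getD_append_right _ _ _ _ le_rfl, Nat.sub_self]
  rfl

lemma wfL_append_cons_ne (N K : List Bool) (c c' : Bool) {i : ℕ} (h : i ≠ N.length) :
    WfL (N ++ c :: K) i = WfL (N ++ c' :: K) i := by
  rcases lt_or_gt_of_ne h with h1 | h1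
  · show (N ++ c :: K).getD i true = (N ++ c' :: K).getD i true
    rw [List.getD_append _ _ _ _ h1, List.getD_append _ _ _ _ h1]
  · obtain ⟨m, hm⟩ : ∃ m, i - N.length = m + 1 := ⟨i - N.length - 1, by omega⟩
    show (N ++ c :: K).getD i true = (N ++ c' :: K).getD i true
    rw [List.getD_append_right _ _ _ _ (by omega), List.getD_append_right _ _ _ _ (by omega),
      hm, List.getD_cons_succ, List.getD_cons_succ]

lemma wfL_append_replicate (w : List Bool) (r i : ℕ) :
    WfL (w ++ List.replicate r true) i = WfL w i := by
  show (w ++ _).getD i true = w.getD i true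
  by_cases h : i < w.length
  · rw [List.getD_append _ _ _ _ h]
  · rw [List.getD_append_right _ _ _ _ (by omega)]
    have h1 : w.getD i true = true := List.getD_eq_default _ _ (by omega)
    rw [h1, List.getD_eq_getElem?_getD, List.getElem?_replicate]
    split <;> rfl

lemma wfL_set {L : List Bool} {t : ℕ} (ht : t < L.length) (c : Bool) (i : ℕ) :
    WfL (L.set t c) i = if i = t then c else WfL L i := by
  show (L.set t c).getD i true = _
  rw [List.getD_eq_getElem?_getD]
  by_cases h : i = t
  · subst h
    rw [List.getElem?_set_self ht, if_pos rfl]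
    rfl
  · rw [List.getElem?_set_ne (fun e => h e.symm), if_neg h, ← List.getD_eq_getElem?_getD]
    rfl

lemma wfL_default {w : List Bool} {i : ℕ} (h : w.length ≤ i) : WfL w i = true := by
  show w.getD i true = true
  rw [List.getD_eq_default _ _ h]

lemma reduced_iff {u : List Bool} (hu : u ≠ []) :
    Reduced u ↔ WfL u (u.length - 1) = false := by
  have hlt : u.length - 1 < u.length := by
    have := List.length_pos_iff.mpr hu
    omega
  constructor
  · intro h
    rcases h with h | h
    · exact absurd h hu
    · rw [List.getLast?_eq_getElem?, List.getElem?_eq_getElem hlt] at h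
      have h2 : u[u.length - 1] = false := Option.some.inj h
      show u.getD _ true = false
      rw [List.getD_eq_getElem _ _ hlt, h2]
  · intro h
    right
    rw [List.getLast?_eq_getElem?, List.getElem?_eq_getElem hlt]
    congr 1
    rw [← List.getD_eq_getElem u true hlt]
    exact h

lemma reduced_eq_of_wfL {w1 w2 : List Bool} (h1 : Reduced w1) (h2 : Reduced w2)
    (h : ∀ i, WfL w1 i = WfL w2 i) : w1 = w2 := by
  have hlen : w1.length = w2.length := by
    by_contra hne
    rcases Nat.lt_or_ge w1.length w2.length with hlt | hge
    · have hu2 : w2 ≠ [] := by intro e; rw [e] at hlt; simp at hlt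
      have hh := (reduced_iff hu2).mp h2
      rw [← h _, wfL_default (by omega)] at hh
      exact Bool.noConfusion hh
    · have hlt : w2.length < w1.length := by omega
      have hu1 : w1 ≠ [] := by intro e; rw [e] at hlt; simp at hlt
      have hh := (reduced_iff hu1).mp h1
      rw [h _, wfL_default (by omega)] at hh
      exact Bool.noConfusion hh
  apply List.ext_getElem hlen
  intro i hi1 hi2
  have hh := h i
  rwa [WfL, WfL, List.getD_eq_getElem _ _ hi1, List.getD_eq_getElem _ _ hi2] at hh

lemma cancelIdx_eq {l : ℕ} {w : List Bool} {t : ℕ} (h1 : CSrc l w t)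
    (h2 : ∀ t', t < t' → ¬ CSrc l w t') : cancelIdx l w = t := by
  have hset : {s | CSrc l w s ∧ ∀ t', s < t' → ¬ CSrc l w t'} = {t} := by
    ext s
    simp only [Set.mem_setOf_eq, Set.mem_singleton_iff]
    constructor
    · rintro ⟨hs1, hs2⟩
      rcases lt_trichotomy s t with hc | hc | hc
      · exact absurd h1 (hs2 t hc)
      · exact hc
      · exact absurd hs1 (h2 s hc)
    · rintro rfl
      exact ⟨h1, h2⟩
  unfold cancelIdx
  rw [hset]
  exact csInf_singleton t

/-- Remove the trailing `A`s. -/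
def rtrim (L : List Bool) : List Bool := (L.reverse.dropWhile (fun b => b)).reverse

/-- Put back the cancellation `A`-arrow. -/
noncomputable def unflip (l : ℕ) (u : List Bool) : List Bool := rtrim (u.set (cancelIdx l u) true)

lemma dropWhile_id_head (M : List Bool) :
    M.dropWhile (fun b => b) = [] ∨ (M.dropWhile (fun b => b)).head? = some false := by
  induction M with
  | nil => exact Or.inl rfl
  | cons b M ih =>
    rw [List.dropWhile_cons]
    cases b
    · right
      rw [if_neg (by simp)]
      rfl
    · rw [if_pos rfl]
      exact ih

lemma rtrim_spec (L : List Bool) :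
    ∃ m, L = rtrim L ++ List.replicate m true ∧ Reduced (rtrim L) := by
  have hsplit : L.reverse.takeWhile (fun b => b) ++ L.reverse.dropWhile (fun b => b)
      = L.reverse := List.takeWhile_append_dropWhile
  have hrep : L.reverse.takeWhile (fun b => b)
      = List.replicate (L.reverse.takeWhile (fun b => b)).length true :=
    List.eq_replicate_of_mem (fun b hb => by simpa using List.mem_takeWhile_imp hb)
  refine ⟨(L.reverse.takeWhile (fun b => b)).length, ?_, ?_⟩
  · have h1 := congrArg List.reverse hsplit
    rw [List.reverse_append, List.reverse_reverse] at h1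
    have h2 : (L.reverse.takeWhile (fun b => b)).reverse
        = List.replicate (L.reverse.takeWhile (fun b => b)).length true := by
      conv_lhs => rw [hrep]
      rw [List.reverse_replicate]
    rw [← h2]
    exact h1.symm
  · rcases dropWhile_id_head L.reverse with h | h
    · left
      rw [rtrim, h]
      rfl
    · right
      rw [rtrim, List.getLast?_reverse]
      exact h

lemma rtrim_append_replicate {w : List Bool} (hred : Reduced w) (r : ℕ) :
    rtrim (w ++ List.replicate r true) = w := by
  rw [rtrim, List.reverse_append, List.reverse_replicate]
  have hdrop : List.dropWhile (fun b => b) (List.replicate r true ++ w.reverse)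
      = List.dropWhile (fun b => b) w.reverse := by
    induction r with
    | zero => rfl
    | succ r ih =>
      rw [List.replicate_succ, List.cons_append, List.dropWhile_cons, if_pos rfl]
      exact ih
  rw [hdrop]
  rcases hred with rfl | hlast
  · simp
  · have hh : w.reverse.head? = some false := by
      rw [List.head?_reverse]
      exact hlast
    obtain ⟨M, hM⟩ : ∃ M, w.reverse = false :: M := by
      cases hrev : w.reverse with
      | nil => rw [hrev] at hh; exact absurd hh (by simp)
      | cons b M =>
        rw [hrev] at hh
        simp at hh
        exact ⟨M, by rw [hh]⟩
    rw [hM, List.dropWhile_cons, if_neg (by simp), ← hM, List.reverse_reverse]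

lemma set_self_of_wfL {L : List Bool} {t : ℕ} {c : Bool} (h : WfL L t = c) (ht : t < L.length) :
    L.set t c = L := by
  apply List.ext_getElem?
  intro i
  by_cases hi : i = t
  · subst hi
    rw [List.getElem?_set_self ht, List.getElem?_eq_getElem ht]
    congr 1
    rw [← List.getD_eq_getElem L true ht]
    exact h.symm
  · rw [List.getElem?_set_ne (fun e => hi e.symm)]

lemma flip_pack {l : ℕ} (hl : 2 ≤ l) {w : List Bool} (hred : Reduced w) (hca : HasCA l w) :
    Reduced (flipCancel l w) ∧ HasCB l (flipCancel l w) ∧ unflip l (flipCancel l w) = w := by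
  obtain ⟨hgood, t, hlet, hcs, hno⟩ := hca
  have hci : cancelIdx l w = t := cancelIdx_eq hcs hno
  have hPlen : (w ++ List.replicate (t + 1 - w.length) true).length
      = w.length + (t + 1 - w.length) := by simp
  have htP : t < (w ++ List.replicate (t + 1 - w.length) true).length := by
    rw [hPlen]; omega
  have hu : flipCancel l w = (w ++ List.replicate (t + 1 - w.length) true).set t false := by
    rw [flipCancel, hci]
  have hWfu : ∀ i, WfL (flipCancel l w) i = if i = t then false else WfL w i := by
    intro i
    rw [hu, wfL_set htP]
    by_cases hi : i = t
    · rw [if_pos hi, if_pos hi]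
    · rw [if_neg hi, if_neg hi, wfL_append_replicate]
  have hlet' : WfL w t = true := hlet
  obtain ⟨hg', hcs', hno'⟩ :=
    lemAB hl ((goodWord_iff_goodI l w).mp hgood) hcs hlet' hWfu
  have hulen : (flipCancel l w).length = w.length + (t + 1 - w.length) := by
    rw [hu, List.length_set, hPlen]
  have hune : flipCancel l w ≠ [] := by
    intro e
    have he : (flipCancel l w).length = 0 := by rw [e]; rfl
    rw [hulen] at he
    omega
  have hredu : Reduced (flipCancel l w) := by
    rw [reduced_iff hune, hulen]
    by_cases h : w.length ≤ t + 1
    · have e : w.length + (t + 1 - w.length) - 1 = t := by omega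
      rw [e, hWfu t, if_pos rfl]
    · have e : w.length + (t + 1 - w.length) - 1 = w.length - 1 := by omega
      rw [e, hWfu _, if_neg (by omega)]
      have hwne : w ≠ [] := by
        intro e2
        rw [e2] at h
        simp at h
      exact (reduced_iff hwne).mp hred
  have hcb : HasCB l (flipCancel l w) := by
    refine ⟨(goodWord_iff_goodI l _).mpr hg', t, ?_, hcs', hno'⟩
    show WfL (flipCancel l w) t = false
    rw [hWfu t, if_pos rfl]
  have hci' : cancelIdx l (flipCancel l w) = t := cancelIdx_eq hcs' hno'
  refine ⟨hredu, hcb, ?_⟩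
  have hset_back : (flipCancel l w).set t true
      = w ++ List.replicate (t + 1 - w.length) true := by
    rw [hu, List.set_set]
    apply set_self_of_wfL _ htP
    rw [wfL_append_replicate]
    exact hlet'
  rw [unflip, hci', hset_back]
  exact rtrim_append_replicate hred _

lemma unflip_pack {l : ℕ} (hl : 2 ≤ l) {u : List Bool} (hred : Reduced u) (hcb : HasCB l u) :
    Reduced (unflip l u) ∧ HasCA l (unflip l u) ∧ flipCancel l (unflip l u) = u := by
  obtain ⟨hgood, t, hlet, hcs, hno⟩ := hcb
  have hci : cancelIdx l u = t := cancelIdx_eq hcs hno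
  have hletf : WfL u t = false := hlet
  have htlen : t < u.length := by
    by_contra h
    rw [wfL_default (by omega)] at hletf
    exact Bool.noConfusion hletf
  have hu1 : unflip l u = rtrim (u.set t true) := by rw [unflip, hci]
  obtain ⟨m, hdec, hredw⟩ := rtrim_spec (u.set t true)
  have hWfw : ∀ i, WfL (rtrim (u.set t true)) i = if i = t then true else WfL u i := by
    intro i
    have h1 : WfL (u.set t true) i = WfL (rtrim (u.set t true)) i := by
      conv_lhs => rw [hdec]
      rw [wfL_append_replicate]
    rw [← h1, wfL_set htlen]
  obtain ⟨hgw, hcsw, hnow, hletw⟩ :=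
    lemBA hl ((goodWord_iff_goodI l u).mp hgood) hcs hletf hno hWfw
  have hcaw : HasCA l (rtrim (u.set t true)) :=
    ⟨(goodWord_iff_goodI l _).mpr hgw, t, hletw, hcsw, hnow⟩
  have hciw : cancelIdx l (rtrim (u.set t true)) = t := cancelIdx_eq hcsw hnow
  refine ⟨by rw [hu1]; exact hredw, by rw [hu1]; exact hcaw, ?_⟩
  rw [hu1]
  have hlenw : (rtrim (u.set t true)).length + m = u.length := by
    have he := congrArg List.length hdec
    rw [List.length_append, List.length_replicate, List.length_set] at he
    omega
  have hpad : rtrim (u.set t true)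
      ++ List.replicate (t + 1 - (rtrim (u.set t true)).length) true = u.set t true := by
    rcases Nat.eq_zero_or_pos m with rfl | hm
    · have e : t + 1 - (rtrim (u.set t true)).length = 0 := by omega
      rw [e]
      exact hdec.symm
    · have hlast : t = u.length - 1 := by
        by_contra hne
        have hu_ne : u ≠ [] := by
          intro e
          rw [e] at htlen
          simp at htlen
        have hfalse : WfL u (u.length - 1) = false := (reduced_iff hu_ne).mp hred
        have hh1 : WfL (u.set t true) (u.length - 1) = false := by
          rw [wfL_set htlen, if_neg (by omega)]
          exact hfalse
        have hh2 : WfL (u.set t true) (u.length - 1) = true := by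
          conv_lhs => rw [hdec]
          rw [wfL_append_replicate]
          exact wfL_default (by omega)
        rw [hh1] at hh2
        exact Bool.noConfusion hh2
      have hmval : t + 1 - (rtrim (u.set t true)).length = m := by omega
      rw [hmval, ← hdec]
  rw [flipCancel, hciw, hpad, List.set_set]
  exact set_self_of_wfL hletf htlen

end Aux13





/-- For `M = NAK ∈ 𝒢_A` (the displayed `A` being the cancellation `A`-arrow),
the monomial `NBK` is good and the displayed `B` is its cancellation `B`-arrow;
moreover the map `NAK ↦ NBK` (flipping the cancellation arrow) is a bijection
from `𝒢_A` onto `𝒢_B`. -/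
theorem stmt13 (l : ℕ) (hl : 2 ≤ l) :
    (∀ N K : List Bool, CancelPair l N K →
      GoodWord l (N ++ false :: K) ∧ CSrc l (N ++ false :: K) N.length ∧
        ∀ t, N.length < t → ¬ CSrc l (N ++ false :: K) t) ∧
    ∃ φ : {w : List Bool // Reduced w ∧ HasCA l w} →
          {w : List Bool // Reduced w ∧ HasCB l w},
      (∀ w, (φ w).val = flipCancel l w.val) ∧ Function.Bijective φ := by
  constructor
  · rintro N K ⟨hgood, hcs, -⟩
    have hA : WfL (N ++ true :: K) N.length = true := wfL_append_cons N K true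
    have hw' : ∀ i, WfL (N ++ false :: K) i
        = if i = N.length then false else WfL (N ++ true :: K) i := by
      intro i
      by_cases hi : i = N.length
      · rw [if_pos hi, hi]
        exact wfL_append_cons N K false
      · rw [if_neg hi]
        exact wfL_append_cons_ne N K false true hi
    obtain ⟨hg', hcs', hno'⟩ :=
      lemAB hl ((goodWord_iff_goodI l _).mp hgood) hcs hA hw'
    exact ⟨(goodWord_iff_goodI l _).mpr hg', hcs', hno'⟩
  · refine ⟨fun w => ⟨flipCancel l w.1,
      (flip_pack hl w.2.1 w.2.2).1, (flip_pack hl w.2.1 w.2.2).2.1⟩, fun w => rfl, ?_⟩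
    rw [Function.bijective_iff_has_inverse]
    refine ⟨fun u => ⟨unflip l u.1,
      (unflip_pack hl u.2.1 u.2.2).1, (unflip_pack hl u.2.1 u.2.2).2.1⟩, ?_, ?_⟩
    · intro w
      apply Subtype.ext
      exact (flip_pack hl w.2.1 w.2.2).2.2
    · intro u
      apply Subtype.ext
      exact (unflip_pack hl u.2.1 u.2.2).2.2
end
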